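/- arXiv:2401.13773 — 10 statements merged into one kernel-verified Lean document; each statement's English description precedes it below -/
import Mathlib

section
/- Let k ∈ [0, 1/ρ_1]. If μ_1 − λ ≥ ρ_1, then the lifting function g_k is superadditive on [0, b]; that is, for all z_1, z_2 ∈ [0, b] with z_1 + z_2 ≤ b, one has g_k(z_1) + g_k(z_2) ≤ g_k(z_1 + z_2). -/
/-- `μ_h = a_1 + ⋯ + a_h` (as a real number). -/
noncomputable def mu (a : ℕ → ℕ) (h : ℕ) : ℝ := ∑ i ∈ Finset.Icc 1 h, (a i : ℝ)

/-- `λ = μ_t − b`, the excess weight of the cover. -/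
noncomputable def lam (a : ℕ → ℕ) (t b : ℕ) : ℝ := mu a t - (b : ℝ)

/-- `ρ_h = max(0, a_{h+1} − (a_1 − λ))`. -/
noncomputable def rho (a : ℕ → ℕ) (t b : ℕ) (h : ℕ) : ℝ :=
  max 0 ((a (h + 1) : ℝ) - ((a 1 : ℝ) - lam a t b))

/-- `w_k(x) = k·x + (1 − k·ρ₁)/2`, where `r` stands for `ρ₁`. -/
noncomputable def wk (r k x : ℝ) : ℝ := k * x + (1 - k * r) / 2

lemma mu_zero (a : ℕ → ℕ) : mu a 0 = 0 := by simp [mu]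

lemma mu_one (a : ℕ → ℕ) : mu a 1 = (a 1 : ℝ) := by simp [mu]

lemma mu_succ (a : ℕ → ℕ) (h : ℕ) : mu a (h + 1) = mu a h + (a (h + 1) : ℝ) := by
  unfold mu
  rw [Finset.sum_Icc_succ_top (by omega : 1 ≤ h + 1)]

lemma mu_two (a : ℕ → ℕ) : mu a 2 = (a 1 : ℝ) + (a 2 : ℝ) := by
  have := mu_succ a 1
  norm_num [mu_one] at this
  exact this

lemma mu_mono (a : ℕ → ℕ) {i j : ℕ} (hij : i ≤ j) : mu a i ≤ mu a j := by
  unfold mu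
  apply Finset.sum_le_sum_of_subset_of_nonneg (Finset.Icc_subset_Icc le_rfl hij)
  intros; positivity

lemma sumShift (t : ℕ) (a : ℕ → ℕ)
    (hmono : ∀ i j, 1 ≤ i → i ≤ j → j ≤ t → a j ≤ a i) :
    ∀ n p q : ℕ, q ≤ p → p + n ≤ t →
      mu a (p + n) - mu a p ≤ mu a (q + n) - mu a q := by
  intro n
  induction n with
  | zero => intro p q _ _; simp
  | succ m ih =>
    intro p q hq hpt
    have h1 := ih p q hq (by omega)
    have h2 : (a (p + m + 1) : ℝ) ≤ (a (q + m + 1) : ℝ) := by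
      exact_mod_cast hmono (q + m + 1) (p + m + 1) (by omega) (by omega) (by omega)
    rw [show p + (m + 1) = (p + m) + 1 by ring, show q + (m + 1) = (q + m) + 1 by ring,
        mu_succ, mu_succ]
    linarith

/-- If `k ∈ [0, 1/ρ₁]` and `μ₁ − λ ≥ ρ₁`, then the lifting function
`g_k` is superadditive on `[0, b]`. -/
theorem gk_superadditive
    (t b : ℕ) (a : ℕ → ℕ) (k : ℝ) (g : ℝ → ℝ)
    (ht : 2 ≤ t)
    (hpos : ∀ i, 1 ≤ i → i ≤ t → 0 < a i)
    (hmono : ∀ i j, 1 ≤ i → i ≤ j → j ≤ t → a j ≤ a i)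
    (hcover : (b : ℝ) < mu a t)
    (hmin : mu a t - (a t : ℝ) ≤ (b : ℝ))
    (hrho1 : 0 < rho a t b 1)
    (hk0 : 0 ≤ k) (hk1 : k ≤ 1 / rho a t b 1)
    (hmain : rho a t b 1 ≤ mu a 1 - lam a t b)
    (hg0 : g 0 = 0)
    (hgF : ∀ h : ℕ, h ≤ t - 1 → ∀ z : ℝ,
      mu a h - lam a t b + rho a t b h < z → z ≤ mu a (h + 1) - lam a t b →
      g z = (h : ℝ))
    (hgS : ∀ h : ℕ, 1 ≤ h → h ≤ t - 1 → ∀ z : ℝ,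
      mu a h - lam a t b < z → z ≤ mu a h - lam a t b + rho a t b h →
      g z = (h : ℝ) - wk (rho a t b 1) k (mu a h - lam a t b + rho a t b h - z)) :
    ∀ z₁ z₂ : ℝ, 0 ≤ z₁ → z₁ ≤ (b : ℝ) → 0 ≤ z₂ → z₂ ≤ (b : ℝ) →
      z₁ + z₂ ≤ (b : ℝ) → g z₁ + g z₂ ≤ g (z₁ + z₂) := by
  classical
  have hLpos : 0 < lam a t b := by unfold lam; linarith
  have hbeq : mu a t - lam a t b = (b : ℝ) := by unfold lam; ring
  have hat1 : (a t : ℝ) ≤ (a 1 : ℝ) := by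
    exact_mod_cast hmono 1 t le_rfl (by omega) le_rfl
  have hLle : lam a t b ≤ (a 1 : ℝ) := by unfold lam; linarith
  have hRnn : ∀ h, 0 ≤ rho a t b h := fun h => le_max_left _ _
  have hRge : ∀ h, (a (h + 1) : ℝ) - ((a 1 : ℝ) - lam a t b) ≤ rho a t b h :=
    fun h => le_max_right _ _
  have hRle1 : ∀ h, 1 ≤ h → h + 1 ≤ t → rho a t b h ≤ rho a t b 1 := by
    intro h h1 hht
    apply max_le (le_max_left _ _)
    have ha2 : (a (h + 1) : ℝ) ≤ (a 2 : ℝ) := by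
      exact_mod_cast hmono 2 (h + 1) (by omega) (by omega) hht
    have h2 : (a (h + 1) : ℝ) - ((a 1 : ℝ) - lam a t b)
        ≤ (a 2 : ℝ) - ((a 1 : ℝ) - lam a t b) := by linarith
    exact le_trans h2 (le_max_right _ _)
  have hrho1eq : rho a t b 1 = (a 2 : ℝ) - ((a 1 : ℝ) - lam a t b) := by
    rcases le_or_gt ((a (1 + 1) : ℝ) - ((a 1 : ℝ) - lam a t b)) 0 with hc | hc
    · exfalso
      have : rho a t b 1 = 0 := max_eq_left hc
      linarith
    · exact max_eq_right hc.le
  have hkr : k * rho a t b 1 ≤ 1 := by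
    rw [le_div_iff₀ hrho1] at hk1; linarith
  have hwk_nn : ∀ x : ℝ, 0 ≤ x → 0 ≤ wk (rho a t b 1) k x := by
    intro x hx; unfold wk
    have := mul_nonneg hk0 hx
    linarith
  have hwk_le1 : ∀ x : ℝ, x ≤ rho a t b 1 → wk (rho a t b 1) k x ≤ 1 := by
    intro x hx; unfold wk
    have := mul_le_mul_of_nonneg_left hx hk0
    linarith
  have hE0 : mu a 0 - lam a t b + rho a t b 0 = 0 := by
    have h0 : rho a t b 0 = lam a t b := by
      unfold rho
      rw [show ((a (0 + 1) : ℝ) - ((a 1 : ℝ) - lam a t b)) = lam a t b by norm_num]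
      exact max_eq_right hLpos.le
    rw [mu_zero, h0]; ring
  have hEstep : ∀ h : ℕ, mu a h - lam a t b + rho a t b h ≤
      mu a (h + 1) - lam a t b + rho a t b (h + 1) := by
    intro h
    have h1 := hRnn (h + 1)
    have h2 : rho a t b h ≤ (a (h + 1) : ℝ) + rho a t b (h + 1) := by
      apply max_le
      · have : (0:ℝ) ≤ (a (h+1) : ℝ) := by positivity
        linarith
      · linarith
    rw [mu_succ]
    linarith
  have hEmono : ∀ i j : ℕ, i ≤ j →
      mu a i - lam a t b + rho a t b i ≤ mu a j - lam a t b + rho a t b j := by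
    intro i j hij
    induction hij with
    | refl => exact le_rfl
    | step _ ih => exact le_trans ih (hEstep _)
  have hidx : ∀ (h : ℕ) (z : ℝ), mu a h - lam a t b < z → z ≤ (b : ℝ) → h ≤ t - 1 := by
    intro h z h1 h2
    by_contra hc
    have hth : t ≤ h := by omega
    have := mu_mono a hth
    linarith
  -- locate a point in the partition
  have hlocate : ∀ z : ℝ, 0 < z → z ≤ (b : ℝ) → ∃ h, h ≤ t - 1 ∧
      ((mu a h - lam a t b + rho a t b h < z ∧ z ≤ mu a (h + 1) - lam a t b) ∨
       (1 ≤ h ∧ mu a h - lam a t b < z ∧ z ≤ mu a h - lam a t b + rho a t b h)) := by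
    intro z hz hzb
    set P : ℕ → Prop := fun h => mu a h - lam a t b < z with hP
    have hP0 : P 0 := by
      show mu a 0 - lam a t b < z
      rw [mu_zero]; linarith
    set H := Nat.findGreatest P (t - 1) with hHdef
    have hHle : H ≤ t - 1 := Nat.findGreatest_le _
    have hPH : mu a H - lam a t b < z := Nat.findGreatest_spec (Nat.zero_le _) hP0
    have hup : z ≤ mu a (H + 1) - lam a t b := by
      rcases eq_or_lt_of_le hHle with he | hl
      · rw [show H + 1 = t by omega]
        linarith
      · have hnp : ¬ P (H + 1) :=
          Nat.findGreatest_is_greatest (P := P) (n := t - 1) (k := H + 1)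
            (by omega) (by omega)
        have : ¬ (mu a (H + 1) - lam a t b < z) := hnp
        linarith [not_lt.mp this]
    rcases le_or_gt z (mu a H - lam a t b + rho a t b H) with hc | hc
    · have hH1 : 1 ≤ H := by
        by_contra h0
        have hH0 : H = 0 := by omega
        rw [hH0, hE0] at hc
        linarith
      exact ⟨H, hHle, Or.inr ⟨hH1, hPH, hc⟩⟩
    · exact ⟨H, hHle, Or.inl ⟨hc, hup⟩⟩
  -- lower bound for g
  have hglow : ∀ (h : ℕ) (z : ℝ), mu a h - lam a t b + rho a t b h < z → z ≤ (b : ℝ) →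
      (h : ℝ) ≤ g z := by
    intro h z hez hzb
    have hz0 : 0 < z := by
      have := hEmono 0 h (Nat.zero_le _)
      rw [hE0] at this
      linarith
    obtain ⟨h', hh't, hcase⟩ := hlocate z hz0 hzb
    rcases hcase with ⟨hF1, hF2⟩ | ⟨hS0, hS1, hS2⟩
    · have hgz : g z = h' := hgF h' hh't z hF1 hF2
      have hhh : h ≤ h' := by
        by_contra hc
        have h1 : h' + 1 ≤ h := by omega
        have := mu_mono a h1
        have := hRnn h
        linarith
      rw [hgz]
      exact_mod_cast hhh
    · have hgz := hgS h' hS0 hh't z hS1 hS2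
      have hhh : h + 1 ≤ h' := by
        by_contra hc
        have h1 : h' ≤ h := by omega
        have := hEmono h' h h1
        linarith
      have hd2 : rho a t b h' ≤ rho a t b 1 := hRle1 h' hS0 (by omega)
      have hw : wk (rho a t b 1) k (mu a h' - lam a t b + rho a t b h' - z) ≤ 1 :=
        hwk_le1 _ (by linarith)
      have hcast : (h : ℝ) + 1 ≤ (h' : ℝ) := by exact_mod_cast hhh
      rw [hgz]
      linarith
  -- subadditivity of the interval right-endpoints e_h
  have hEsub : ∀ h1 h2 : ℕ, 1 ≤ h1 → 1 ≤ h2 → h1 + h2 + 1 ≤ t →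
      mu a (h1 + h2) - lam a t b + rho a t b (h1 + h2) ≤
        (mu a h1 - lam a t b + rho a t b h1) + (mu a h2 - lam a t b + rho a t b h2) := by
    intro h1 h2 hh1 hh2 hht
    obtain ⟨m, rfl⟩ : ∃ m, h1 = m + 1 := ⟨h1 - 1, by omega⟩
    have hr1 := hRge (m + 1)
    have hr2 := hRge h2
    have e2 := mu_one a
    rcases le_or_gt ((a (m + 1 + h2 + 1) : ℝ) - ((a 1 : ℝ) - lam a t b)) 0 with hc | hc
    · have hρh : rho a t b (m + 1 + h2) = 0 := max_eq_left hc
      have hs := sumShift t a hmono m (h2 + 1) 1 (by omega) (by omega)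
      rw [show h2 + 1 + m = m + 1 + h2 by ring, show 1 + m = m + 1 by ring] at hs
      have e1 := mu_succ a h2
      have hρ1nn := hRnn (m + 1)
      rw [hρh]
      linarith
    · have hρh : rho a t b (m + 1 + h2) =
          (a (m + 1 + h2 + 1) : ℝ) - ((a 1 : ℝ) - lam a t b) := max_eq_right hc.le
      have hs := sumShift t a hmono (m + 1) (h2 + 1) 1 (by omega) (by omega)
      rw [show h2 + 1 + (m + 1) = (m + 1 + h2) + 1 by ring,
          show 1 + (m + 1) = (m + 1) + 1 by ring] at hs
      have e1 := mu_succ a h2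
      have e3 := mu_succ a (m + 1 + h2)
      have e4 := mu_succ a (m + 1)
      rw [hρh]
      linarith
  -- key case: z1 in F(h1), z2 in S(h2)
  have keyFS : ∀ (z1 z2 : ℝ) (h1 h2 : ℕ), h1 ≤ t - 1 → h2 ≤ t - 1 → 1 ≤ h2 →
      mu a h1 - lam a t b + rho a t b h1 < z1 → z1 ≤ mu a (h1 + 1) - lam a t b →
      mu a h2 - lam a t b < z2 → z2 ≤ mu a h2 - lam a t b + rho a t b h2 →
      z1 + z2 ≤ (b : ℝ) → g z1 + g z2 ≤ g (z1 + z2) := by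
    intro z1 z2 h1 h2 hh1t hh2t hh2 hF1 hF2 hS1 hS2 hsb
    have hgz1 : g z1 = h1 := hgF h1 hh1t z1 hF1 hF2
    have hgz2 := hgS h2 hh2 hh2t z2 hS1 hS2
    have hd0 : 0 ≤ mu a h2 - lam a t b + rho a t b h2 - z2 := by linarith
    have e2 := mu_one a
    -- h1 + h2 + 1 ≤ t
    have hht : h1 + h2 + 1 ≤ t := by
      by_contra hc
      have hh1' : 1 ≤ h1 := by omega
      have he1 : mu a (h1 + 1) - (a 1 : ℝ) ≤ mu a h1 - lam a t b + rho a t b h1 := by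
        have := hRge h1
        rw [mu_succ]
        linarith
      have hs := sumShift t a hmono (t - h2) h2 1 hh2 (by omega)
      rw [show h2 + (t - h2) = t by omega] at hs
      have hmm : mu a (1 + (t - h2)) ≤ mu a (h1 + 1) := mu_mono a (by omega)
      linarith
    -- s > mu(h1+h2) - lam
    have hsgt : mu a (h1 + h2) - lam a t b < z1 + z2 := by
      rcases Nat.eq_zero_or_pos h1 with h10 | h1p
      · subst h10
        simp only [Nat.zero_add]
        have hz1 : 0 < z1 := by rw [hE0] at hF1; linarith
        linarith
      · have he1 : mu a (h1 + 1) - (a 1 : ℝ) ≤ mu a h1 - lam a t b + rho a t b h1 := by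
          have := hRge h1
          rw [mu_succ]
          linarith
        have hs := sumShift t a hmono h1 h2 1 hh2 (by omega)
        rw [show h2 + h1 = h1 + h2 by ring, show 1 + h1 = h1 + 1 by ring] at hs
        linarith
    rcases le_or_gt (z1 + z2) (mu a (h1 + h2) - lam a t b + rho a t b (h1 + h2)) with hc | hc
    · -- sum lands in S(h1+h2)
      have hgs := hgS (h1 + h2) (by omega) (by omega) (z1 + z2) hsgt hc
      have hkey : mu a (h1 + h2) - lam a t b + rho a t b (h1 + h2) - (z1 + z2)
          ≤ mu a h2 - lam a t b + rho a t b h2 - z2 := by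
        rcases Nat.eq_zero_or_pos h1 with h10 | h1p
        · subst h10
          simp only [Nat.zero_add]
          have hz1 : 0 < z1 := by rw [hE0] at hF1; linarith
          linarith
        · have := hEsub h1 h2 h1p hh2 hht
          linarith
      have hwm := mul_le_mul_of_nonneg_left hkey hk0
      rw [hgz1, hgz2, hgs]
      unfold wk
      push_cast
      linarith
    · have hgs := hglow (h1 + h2) (z1 + z2) hc hsb
      have hw := hwk_nn _ hd0
      rw [hgz1, hgz2]
      push_cast at hgs ⊢
      linarith
  -- key case: both in S
  have keySS : ∀ (z1 z2 : ℝ) (h1 h2 : ℕ), h1 ≤ t - 1 → h2 ≤ t - 1 → 1 ≤ h1 → 1 ≤ h2 →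
      mu a h1 - lam a t b < z1 → z1 ≤ mu a h1 - lam a t b + rho a t b h1 →
      mu a h2 - lam a t b < z2 → z2 ≤ mu a h2 - lam a t b + rho a t b h2 →
      z1 + z2 ≤ (b : ℝ) → g z1 + g z2 ≤ g (z1 + z2) := by
    intro z1 z2 h1 h2 hh1t hh2t hh1 hh2 hS1a hS1b hS2a hS2b hsb
    have hgz1 := hgS h1 hh1 hh1t z1 hS1a hS1b
    have hgz2 := hgS h2 hh2 hh2t z2 hS2a hS2b
    have hd10 : 0 ≤ mu a h1 - lam a t b + rho a t b h1 - z1 := by linarith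
    have hd20 : 0 ≤ mu a h2 - lam a t b + rho a t b h2 - z2 := by linarith
    have e2 := mu_one a
    have hht : h1 + h2 ≤ t := by
      by_contra hc
      have hs := sumShift t a hmono (t - h2) h2 1 hh2 (by omega)
      rw [show h2 + (t - h2) = t by omega] at hs
      have hmm : mu a (1 + (t - h2)) ≤ mu a h1 := mu_mono a (by omega)
      linarith
    rcases le_or_gt (z1 + z2) (mu a (h1 + h2) - lam a t b) with hle | hgt
    · -- sum lands in F(h1+h2-1)
      obtain ⟨m, rfl⟩ : ∃ m, h1 = m + 1 := ⟨h1 - 1, by omega⟩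
      have hs := sumShift t a hmono m h2 1 hh2 (by omega)
      rw [show h2 + m = m + h2 by ring, show 1 + m = m + 1 by ring] at hs
      have hρ : rho a t b (m + h2) ≤ rho a t b 1 := hRle1 _ (by omega) (by omega)
      have hElt : mu a (m + h2) - lam a t b + rho a t b (m + h2) < z1 + z2 := by
        linarith
      have hgs := hgF (m + h2) (by omega) (z1 + z2) hElt
        (by rw [show m + h2 + 1 = m + 1 + h2 by ring]; exact hle)
      have hdd : rho a t b 1 ≤ (mu a (m + 1) - lam a t b + rho a t b (m + 1) - z1) +
          (mu a h2 - lam a t b + rho a t b h2 - z2) := by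
        have hs2 := sumShift t a hmono m (h2 + 1) 2 (by omega) (by omega)
        rw [show h2 + 1 + m = m + 1 + h2 by ring, show 2 + m = m + 2 by ring] at hs2
        have eA := mu_succ a (m + 1)
        have eB := mu_succ a h2
        have eC := mu_two a
        have hr1' := hRge (m + 1)
        have hr2' := hRge h2
        rw [hrho1eq]
        linarith
      have hwm := mul_le_mul_of_nonneg_left hdd hk0
      rw [hgz1, hgz2, hgs]
      unfold wk
      push_cast
      linarith
    · rcases le_or_gt (z1 + z2) (mu a (h1 + h2) - lam a t b + rho a t b (h1 + h2)) with hc2 | hc2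
      · -- sum lands in S(h1+h2)
        have hht1 : h1 + h2 ≤ t - 1 := hidx (h1 + h2) (z1 + z2) hgt hsb
        have hgs := hgS (h1 + h2) (by omega) hht1 (z1 + z2) hgt hc2
        have hsub := hEsub h1 h2 hh1 hh2 (by omega)
        have hkey : mu a (h1 + h2) - lam a t b + rho a t b (h1 + h2) - (z1 + z2)
            ≤ (mu a h1 - lam a t b + rho a t b h1 - z1) +
              (mu a h2 - lam a t b + rho a t b h2 - z2) := by linarith
        have hwm := mul_le_mul_of_nonneg_left hkey hk0
        rw [hgz1, hgz2, hgs]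
        unfold wk
        push_cast
        linarith
      · have hgs := hglow (h1 + h2) (z1 + z2) hc2 hsb
        have hw1 := hwk_nn _ hd10
        have hw2 := hwk_nn _ hd20
        rw [hgz1, hgz2]
        push_cast at hgs ⊢
        linarith
  -- key case: both in F
  have keyFF : ∀ (z1 z2 : ℝ) (h1 h2 : ℕ), h1 ≤ t - 1 → h2 ≤ t - 1 →
      mu a h1 - lam a t b + rho a t b h1 < z1 → z1 ≤ mu a (h1 + 1) - lam a t b →
      mu a h2 - lam a t b + rho a t b h2 < z2 → z2 ≤ mu a (h2 + 1) - lam a t b →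
      z1 + z2 ≤ (b : ℝ) → g z1 + g z2 ≤ g (z1 + z2) := by
    intro z1 z2 h1 h2 hh1t hh2t hF1a hF1b hF2a hF2b hsb
    have hgz1 : g z1 = h1 := hgF h1 hh1t z1 hF1a hF1b
    have hgz2 : g z2 = h2 := hgF h2 hh2t z2 hF2a hF2b
    have e2 := mu_one a
    rcases Nat.eq_zero_or_pos h1 with h10 | h1p
    · subst h10
      have hz1 : 0 < z1 := by rw [hE0] at hF1a; linarith
      have hgs := hglow h2 (z1 + z2) (by linarith) hsb
      rw [hgz1, hgz2]
      push_cast at hgs ⊢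
      linarith
    rcases Nat.eq_zero_or_pos h2 with h20 | h2p
    · subst h20
      have hz2 : 0 < z2 := by rw [hE0] at hF2a; linarith
      have hgs := hglow h1 (z1 + z2) (by linarith) hsb
      rw [hgz1, hgz2]
      push_cast at hgs ⊢
      linarith
    have hht : h1 + h2 + 1 ≤ t := by
      by_contra hc
      have hE2' : mu a (t - h1) - lam a t b + rho a t b (t - h1) ≤
          mu a h2 - lam a t b + rho a t b h2 := hEmono _ _ (by omega)
      have he1 : mu a (h1 + 1) - (a 1 : ℝ) ≤ mu a h1 - lam a t b + rho a t b h1 := by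
        have := hRge h1
        rw [mu_succ]
        linarith
      have he2 : mu a ((t - h1) + 1) - (a 1 : ℝ) ≤
          mu a (t - h1) - lam a t b + rho a t b (t - h1) := by
        have := hRge (t - h1)
        rw [mu_succ]
        linarith
      have hs := sumShift t a hmono (h1 - 1) ((t - h1) + 1) 2 (by omega) (by omega)
      rw [show (t - h1) + 1 + (h1 - 1) = t by omega, show 2 + (h1 - 1) = h1 + 1 by omega] at hs
      have eC := mu_two a
      have hρpos : 0 < (a 2 : ℝ) - ((a 1 : ℝ) - lam a t b) := by
        rw [← hrho1eq]; exact hrho1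
      linarith
    have hsub := hEsub h1 h2 h1p h2p hht
    have hgs := hglow (h1 + h2) (z1 + z2) (by linarith) hsb
    rw [hgz1, hgz2]
    push_cast at hgs ⊢
    linarith
  -- main dispatch
  intro z1 z2 hz10 hz1b hz20 hz2b hsb
  rcases eq_or_lt_of_le hz10 with h10 | h10
  · rw [← h10, hg0, zero_add, zero_add]
  rcases eq_or_lt_of_le hz20 with h20 | h20
  · rw [← h20, hg0, add_zero, add_zero]
  obtain ⟨h1, hh1t, hc1⟩ := hlocate z1 h10 hz1b
  obtain ⟨h2, hh2t, hc2⟩ := hlocate z2 h20 hz2b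
  rcases hc1 with ⟨hF1a, hF1b⟩ | ⟨hS10, hS1a, hS1b⟩ <;>
    rcases hc2 with ⟨hF2a, hF2b⟩ | ⟨hS20, hS2a, hS2b⟩
  · exact keyFF z1 z2 h1 h2 hh1t hh2t hF1a hF1b hF2a hF2b hsb
  · exact keyFS z1 z2 h1 h2 hh1t hh2t hS20 hF1a hF1b hS2a hS2b hsb
  · have := keyFS z2 z1 h2 h1 hh2t hh1t hS10 hF2a hF2b hS1a hS1b (by linarith)
    rw [add_comm z2 z1] at this
    linarith
  · exact keySS z1 z2 h1 h2 hh1t hh2t hS10 hS20 hS1a hS1b hS2a hS2b hsb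
end

section
/- Let k ∈ [0, 1/ρ_1] and assume μ_1 − λ ≥ ρ_1. Then g_k(z) ≤ f(z) for all z ∈ [0, b], where f is the lifting function of the minimal cover. -/
/-- If `k ∈ [0, 1/ρ₁]` and `μ₁ − λ ≥ ρ₁`, then `g_k(z) ≤ f(z)`
for all `z ∈ [0, b]`, where `f` is the lifting function of the minimal cover. -/
theorem gk_le_lifting_function
    (t b : ℕ) (a : ℕ → ℕ) (k : ℝ) (g f : ℝ → ℝ)
    (ht : 2 ≤ t)
    (hpos : ∀ i, 1 ≤ i → i ≤ t → 0 < a i)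
    (hmono : ∀ i j, 1 ≤ i → i ≤ j → j ≤ t → a j ≤ a i)
    (hcover : (b : ℝ) < mu a t)
    (hmin : mu a t - (a t : ℝ) ≤ (b : ℝ))
    (hrho1 : 0 < rho a t b 1)
    (hk0 : 0 ≤ k) (hk1 : k ≤ 1 / rho a t b 1)
    (hmain : rho a t b 1 ≤ mu a 1 - lam a t b)
    (hg0 : g 0 = 0)
    (hgF : ∀ h : ℕ, h ≤ t - 1 → ∀ z : ℝ,
      mu a h - lam a t b + rho a t b h < z → z ≤ mu a (h + 1) - lam a t b →
      g z = (h : ℝ))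
    (hgS : ∀ h : ℕ, 1 ≤ h → h ≤ t - 1 → ∀ z : ℝ,
      mu a h - lam a t b < z → z ≤ mu a h - lam a t b + rho a t b h →
      g z = (h : ℝ) - wk (rho a t b 1) (k) (mu a h - lam a t b + rho a t b h - z))
    (hf0 : ∀ z : ℝ, 0 ≤ z → z ≤ mu a 1 - lam a t b → f z = 0)
    (hfS : ∀ h : ℕ, 1 ≤ h → h ≤ t - 1 → ∀ z : ℝ,
      mu a h - lam a t b < z → z ≤ mu a (h + 1) - lam a t b → f z = (h : ℝ))
    :
    ∀ z : ℝ, 0 ≤ z → z ≤ (b : ℝ) → g z ≤ f z := by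
  classical
  intro z hz0 hzb
  have hlam_pos : 0 < lam a t b := by simp only [lam]; linarith
  have hmu0 : mu a 0 = 0 := by simp [mu]
  have hrho0 : rho a t b 0 = lam a t b := by
    simp only [rho, zero_add]
    rw [max_eq_right] <;> linarith
  have hkr : k * rho a t b 1 ≤ 1 := by
    have := (le_div_iff₀ hrho1).mp hk1
    linarith
  rcases eq_or_lt_of_le hz0 with h0 | hz0'
  · rw [← h0, hg0, hf0 0 le_rfl (by linarith)]
  -- 0 < z
  have hPt : z ≤ mu a t - lam a t b := by simp only [lam]; linarith
  set P : ℕ → Prop := fun h => z ≤ mu a h - lam a t b with hP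
  have hex : ∃ m, P m := ⟨t, hPt⟩
  set m := Nat.find hex with hm
  have hPm : P m := Nat.find_spec hex
  have hmt : m ≤ t := Nat.find_le hPt
  have hm1 : 1 ≤ m := by
    rcases Nat.eq_zero_or_pos m with h | h
    · exfalso
      have := hPm
      rw [h] at this
      simp only [hP, hmu0] at this
      linarith
    · exact h
  set h := m - 1 with hh
  have hmh : m = h + 1 := (Nat.succ_pred_eq_of_pos hm1).symm
  have hht : h ≤ t - 1 := by omega
  have hnot : ¬ P h := Nat.find_min hex (by omega)
  have hlow : mu a h - lam a t b < z := by
    simp only [hP] at hnot; linarith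
  have hup : z ≤ mu a (h + 1) - lam a t b := by rw [← hmh]; exact hPm
  rcases Nat.eq_zero_or_pos h with hzero | hhpos
  · -- h = 0 : z ∈ (0, μ₁ − λ]
    rw [hzero] at hlow hup
    rw [hf0 z hz0 (by simpa using hup)]
    rw [hgF 0 (by omega) z (by rw [hmu0, hrho0]; linarith) (by simpa using hup)]
    norm_num
  · -- h ≥ 1
    rw [hfS h hhpos hht z hlow hup]
    by_cases hc : z ≤ mu a h - lam a t b + rho a t b h
    · rw [hgS h hhpos hht z hlow hc]
      have hx : 0 ≤ mu a h - lam a t b + rho a t b h - z := by linarith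
      have : 0 ≤ wk (rho a t b 1) k (mu a h - lam a t b + rho a t b h - z) := by
        simp only [wk]
        have := mul_nonneg hk0 hx
        linarith
      linarith
    · rw [hgF h hht z (by linarith) hup]
end

section
/- Let k ∈ [0, 1/ρ_1] and assume μ_1 − λ ≥ ρ_1. Then the sequence-independent lifting of the minimal cover inequality by g_k is valid: for every x ∈ P, ∑_{j=1}^t x_j + ∑_{j=t+1}^n g_k(a_j) x_j ≤ t − 1. -/
namespace GK

variable (a : ℕ → ℕ) (t b : ℕ)

lemma mu_zero : mu a 0 = 0 := by simp [mu]

lemma mu_succ (h : ℕ) : mu a (h + 1) = mu a h + a (h + 1) := by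
  rw [mu, mu, Finset.sum_Icc_succ_top (Nat.one_le_iff_ne_zero.mpr (Nat.succ_ne_zero h))]

lemma mu_mono : Monotone (mu a) := by
  apply monotone_nat_of_le_succ
  intro h
  rw [mu_succ]
  have : (0:ℝ) ≤ a (h+1) := Nat.cast_nonneg _
  linarith

lemma mu_one : mu a 1 = a 1 := by
  rw [show (1:ℕ) = 0 + 1 from rfl, mu_succ, mu_zero]; simp

lemma lam_pos (hcover : (b : ℝ) < mu a t) : 0 < lam a t b := by unfold lam; linarith

lemma lam_le_at (hmin : mu a t - (a t : ℝ) ≤ (b : ℝ)) : lam a t b ≤ a t := by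
  unfold lam; linarith

lemma lam_le_a (hmono : ∀ i j, 1 ≤ i → i ≤ j → j ≤ t → a j ≤ a i)
    (hmin : mu a t - (a t : ℝ) ≤ (b : ℝ)) (i : ℕ) (h1 : 1 ≤ i) (h2 : i ≤ t) :
    lam a t b ≤ a i := by
  have h3 : (a t : ℝ) ≤ a i := by exact_mod_cast hmono i t h1 h2 le_rfl
  linarith [lam_le_at a t b hmin]

lemma rho_nonneg (h : ℕ) : 0 ≤ rho a t b h := le_max_left _ _

lemma rho_ge (h : ℕ) : (a (h + 1) : ℝ) - ((a 1 : ℝ) - lam a t b) ≤ rho a t b h :=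
  le_max_right _ _

lemma rho_le (h : ℕ) (hl1 : lam a t b ≤ a 1) : rho a t b h ≤ a (h + 1) := by
  apply max_le (Nat.cast_nonneg _) (by linarith)

lemma rho_anti (hmono : ∀ i j, 1 ≤ i → i ≤ j → j ≤ t → a j ≤ a i)
    (h h' : ℕ) (hh : h ≤ h') (h't : h' + 1 ≤ t) :
    rho a t b h' ≤ rho a t b h := by
  have h1 : (a (h' + 1) : ℝ) ≤ a (h + 1) := by
    exact_mod_cast hmono (h+1) (h'+1) (Nat.le_add_left 1 h) (by omega) h't
  apply max_le (le_max_left _ _)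
  calc (a (h' + 1) : ℝ) - ((a 1:ℝ) - lam a t b) ≤ (a (h + 1) : ℝ) - ((a 1:ℝ) - lam a t b) := by linarith
  _ ≤ _ := rho_ge a t b h

lemma rho_zero (hl : 0 ≤ lam a t b) : rho a t b 0 = lam a t b := by
  unfold rho
  have : ((a (0+1) : ℝ)) = a 1 := rfl
  rw [max_eq_right] <;> simp <;> linarith

lemma rho1_eq (hrho1 : 0 < rho a t b 1) :
    rho a t b 1 = (a 2 : ℝ) - ((a 1 : ℝ) - lam a t b) := by
  unfold rho at *
  have e : ((1:ℕ)+1) = 2 := rfl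
  rw [e] at hrho1 ⊢
  rcases max_cases (0:ℝ) ((a 2 : ℝ) - ((a 1 : ℝ) - lam a t b)) with ⟨h1, h2⟩ | ⟨h1, h2⟩
  · rw [h1] at hrho1; linarith
  · exact h1

/-- `h ↦ μ_h + ρ_h` is monotone. -/
lemma E_mono (hl1 : lam a t b ≤ a 1) : Monotone (fun h => mu a h + rho a t b h) := by
  apply monotone_nat_of_le_succ
  intro h
  show mu a h + rho a t b h ≤ mu a (h+1) + rho a t b (h+1)
  rw [mu_succ]
  have h1 := rho_le a t b h hl1
  have h2 := rho_nonneg a t b (h+1)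
  linarith

/-- sum-shift comparison. -/
lemma mu_shift (hmono : ∀ i j, 1 ≤ i → i ≤ j → j ≤ t → a j ≤ a i)
    (m : ℕ) : ∀ c d : ℕ, 1 ≤ d → d ≤ c → c + m ≤ t →
    mu a (c + m) - mu a c ≤ mu a (d + m) - mu a d := by
  induction m with
  | zero => intro c d _ _ _; simp
  | succ m ih =>
    intro c d hd hdc hct
    have h1 : mu a (c + (m+1)) = mu a (c + m) + a (c + m + 1) := by
      rw [show c + (m+1) = (c+m) + 1 by ring, mu_succ]
    have h2 : mu a (d + (m+1)) = mu a (d + m) + a (d + m + 1) := by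
      rw [show d + (m+1) = (d+m) + 1 by ring, mu_succ]
    have h3 : (a (c + m + 1) : ℝ) ≤ a (d + m + 1) := by
      exact_mod_cast hmono (d+m+1) (c+m+1) (by omega) (by omega) (by omega)
    have h4 := ih c d hd hdc (by omega)
    linarith

/-- Core inequality: `μ_{h₂+h₁} − μ_{h₂} ≤ μ_{h₁} − λ + ρ_{h₁}`. -/
lemma core (hmono : ∀ i j, 1 ≤ i → i ≤ j → j ≤ t → a j ≤ a i)
    (h₁ h₂ : ℕ) (h2 : 1 ≤ h₂) (hH : h₂ + h₁ ≤ t) :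
    mu a (h₂ + h₁) - mu a h₂ ≤ mu a h₁ - lam a t b + rho a t b h₁ := by
  have hs := mu_shift a t hmono h₁ h₂ 1 le_rfl h2 hH
  have h1 : mu a (1 + h₁) = mu a h₁ + a (h₁ + 1) := by
    rw [show 1 + h₁ = h₁ + 1 by ring, mu_succ]
  have h2' := rho_ge a t b h₁
  rw [mu_one] at hs
  linarith


section arith

variable (hmono : ∀ i j, 1 ≤ i → i ≤ j → j ≤ t → a j ≤ a i)
include hmono

/-- Lemma A: `M_H + ρ_H ≤ E_{h₁} + E_{h₂}` for `H = h₁+h₂ ≤ t−1`. -/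
lemma lemA (h₁ h₂ : ℕ) (h1 : 1 ≤ h₁) (h2 : 1 ≤ h₂) (hH : h₁ + h₂ + 1 ≤ t) :
    mu a (h₁ + h₂) - lam a t b + rho a t b (h₁ + h₂) ≤
      (mu a h₁ - lam a t b + rho a t b h₁) + (mu a h₂ - lam a t b + rho a t b h₂) := by
  have hr := rho_anti a t b hmono h₂ (h₁ + h₂) (Nat.le_add_left _ _) (by omega)
  have hc := core a t b hmono h₁ h₂ h2 (by omega)
  rw [Nat.add_comm h₂ h₁] at hc
  linarith

/-- Lemma A′: overflow case `h₁+h₂ ≥ t`. -/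
lemma lemA' (hl1 : lam a t b ≤ a 1)
    (h₁ h₂ : ℕ) (h1 : 1 ≤ h₁) (h2 : 1 ≤ h₂) (h1t : h₁ + 1 ≤ t) (h2t : h₂ + 1 ≤ t)
    (hH : t ≤ h₁ + h₂) :
    mu a t - lam a t b ≤
      (mu a h₁ - lam a t b + rho a t b h₁) + (mu a h₂ - lam a t b + rho a t b h₂) := by
  set h₂' := t - h₁ with hdef
  have h2'1 : 1 ≤ h₂' := by omega
  have h2'le : h₂' ≤ h₂ := by omega
  have hE := E_mono a t b hl1 h2'le
  simp only at hE
  have hc := core a t b hmono h₁ h₂' h2'1 (by omega)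
  rw [show h₂' + h₁ = t by omega] at hc
  have hrn := rho_nonneg a t b h₂'
  linarith

/-- Lemma B: `M_{h₁+h₂} ≤ M_{h₁} + M_{h₂} + ρ_{h₂}` for `h₁ ≥ 1`, `h₁+h₂ ≤ t`. -/
lemma lemB (h₁ h₂ : ℕ) (h1 : 1 ≤ h₁) (hH : h₁ + h₂ ≤ t) :
    mu a (h₁ + h₂) - lam a t b ≤
      (mu a h₁ - lam a t b) + (mu a h₂ - lam a t b + rho a t b h₂) := by
  have hc := core a t b hmono h₂ h₁ h1 (by omega)
  linarith

/-- Lemma C: `M_{h₁+h₂} + ρ₁ ≤ E_{h₁} + E_{h₂}` for `h₁,h₂ ≥ 1`, `h₁+h₂ ≤ t`. -/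
lemma lemC (hrho1 : 0 < rho a t b 1)
    (h₁ h₂ : ℕ) (h1 : 1 ≤ h₁) (h2 : 1 ≤ h₂) (hH : h₁ + h₂ ≤ t) :
    mu a (h₁ + h₂) - lam a t b + rho a t b 1 ≤
      (mu a h₁ - lam a t b + rho a t b h₁) + (mu a h₂ - lam a t b + rho a t b h₂) := by
  obtain ⟨m, rfl⟩ : ∃ m, h₁ = m + 1 := ⟨h₁ - 1, by omega⟩
  have hs := mu_shift a t hmono m (h₂ + 1) 2 (by omega) (by omega) (by omega)
  rw [show h₂ + 1 + m = m + 1 + h₂ by omega, show 2 + m = (m + 1) + 1 by omega] at hs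
  have e1 : mu a (m + 1 + 1) = mu a (m + 1) + a (m + 1 + 1) := mu_succ a _
  have e2 : mu a (h₂ + 1) = mu a h₂ + a (h₂ + 1) := mu_succ a _
  have e3 : mu a 2 = a 1 + a 2 := by
    rw [show (2:ℕ) = 1 + 1 from rfl, mu_succ, mu_one]
  have r1 := rho1_eq a t b hrho1
  have rg1 := rho_ge a t b (m + 1)
  have rg2 := rho_ge a t b h₂
  linarith

/-- Core for D: `μ_{h₁+h₂−1} ≤ μ_{h₁} + μ_{h₂} − λ`. -/
lemma lemDcore (hl1 : lam a t b ≤ a 1)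
    (h₁ h₂ : ℕ) (h1 : 1 ≤ h₁) (h2 : 1 ≤ h₂) (hH : h₁ + h₂ - 1 ≤ t) :
    mu a (h₁ + h₂ - 1) ≤ mu a h₁ + mu a h₂ - lam a t b := by
  obtain ⟨m, rfl⟩ : ∃ m, h₁ = m + 1 := ⟨h₁ - 1, by omega⟩
  have hs := mu_shift a t hmono m h₂ 1 le_rfl h2 (by omega)
  rw [show m + 1 + h₂ - 1 = h₂ + m by omega, show 1 + m = m + 1 by omega, mu_one] at *
  linarith

/-- Lemma D: `M_{H−1} + ρ_{H−1} ≤ M_{h₁} + M_{h₂}` for `h₁,h₂ ≥ 1`, `H = h₁+h₂ ≤ t`,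
using the main hypothesis. -/
lemma lemD (hrho1 : 0 < rho a t b 1) (hmain : rho a t b 1 ≤ mu a 1 - lam a t b)
    (hl1 : lam a t b ≤ a 1)
    (h₁ h₂ : ℕ) (h1 : 1 ≤ h₁) (h2 : 1 ≤ h₂) (hH : h₁ + h₂ ≤ t) :
    mu a (h₁ + h₂ - 1) - lam a t b + rho a t b (h₁ + h₂ - 1) ≤
      (mu a h₁ - lam a t b) + (mu a h₂ - lam a t b) := by
  have hdc := lemDcore a t b hmono hl1 h₁ h₂ h1 h2 (by omega)
  have hmain' : 2 * lam a t b ≤ 2 * (a 1 : ℝ) - a 2 := by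
    have r1 := rho1_eq a t b hrho1
    rw [mu_one] at hmain
    linarith
  -- second bound : μ_H + 2λ ≤ μ_{h₁} + μ_{h₂} + a₁
  obtain ⟨m, rfl⟩ : ∃ m, h₁ = m + 1 := ⟨h₁ - 1, by omega⟩
  have hs := mu_shift a t hmono m (h₂ + 1) 2 (by omega) (by omega) (by omega)
  rw [show h₂ + 1 + m = m + 1 + h₂ by omega, show 2 + m = (m + 1) + 1 by omega] at hs
  have e1 : mu a (m + 1 + 1) = mu a (m + 1) + a (m + 1 + 1) := mu_succ a _
  have e2 : mu a (h₂ + 1) = mu a h₂ + a (h₂ + 1) := mu_succ a _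
  have e3 : mu a 2 = a 1 + a 2 := by
    rw [show (2:ℕ) = 1 + 1 from rfl, mu_succ, mu_one]
  have ha2 : (a (h₂ + 1) : ℝ) ≤ a 2 := by
    exact_mod_cast hmono 2 (h₂ + 1) (by omega) (by omega) (by omega)
  have ha1 : (a (m + 1 + 1) : ℝ) ≤ a 2 := by
    exact_mod_cast hmono 2 (m + 1 + 1) (by omega) (by omega) (by omega)
  have hmuH : mu a (m + 1 + h₂) = mu a (m + 1 + h₂ - 1) + a (m + 1 + h₂) := by
    have h5 := mu_succ a (m + h₂)
    rw [show m + h₂ + 1 = m + 1 + h₂ by omega] at h5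
    rw [h5, show m + 1 + h₂ - 1 = m + h₂ by omega]
  unfold rho
  rw [show m + 1 + h₂ - 1 + 1 = m + 1 + h₂ by omega]
  have hgoal2 : (a (m + 1 + h₂) : ℝ) - ((a 1 : ℝ) - lam a t b) ≤
      (mu a (m+1) - lam a t b) + (mu a h₂ - lam a t b) - (mu a (m + 1 + h₂ - 1) - lam a t b) := by
    linarith
  have hgoal1 : (0:ℝ) ≤
      (mu a (m+1) - lam a t b) + (mu a h₂ - lam a t b) - (mu a (m + 1 + h₂ - 1) - lam a t b) := by
    linarith
  have := max_le hgoal1 hgoal2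
  linarith

/-- Lemma D′: `M_t ≤ M_{h₁} + M_{h₂}` when `h₁+h₂ ≥ t+1`, `h₁,h₂ ≤ t−1`. -/
lemma lemD' (hl1 : lam a t b ≤ a 1)
    (h₁ h₂ : ℕ) (h1 : 1 ≤ h₁) (h2 : 1 ≤ h₂) (h1t : h₁ + 1 ≤ t) (h2t : h₂ + 1 ≤ t)
    (hH : t + 1 ≤ h₁ + h₂) :
    mu a t - lam a t b ≤ (mu a h₁ - lam a t b) + (mu a h₂ - lam a t b) := by
  set h₂' := t + 1 - h₁ with hdef
  have hdc := lemDcore a t b hmono hl1 h₁ h₂' h1 (by omega) (by omega)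
  rw [show h₁ + h₂' - 1 = t by omega] at hdc
  have := mu_mono a (show h₂' ≤ h₂ by omega)
  linarith

end arith

section gside

variable (k : ℝ) (g : ℝ → ℝ)
variable (hmono : ∀ i j, 1 ≤ i → i ≤ j → j ≤ t → a j ≤ a i)
variable (hcover : (b : ℝ) < mu a t)
variable (hmin : mu a t - (a t : ℝ) ≤ (b : ℝ))
variable (ht : 2 ≤ t)
variable (hrho1 : 0 < rho a t b 1)
variable (hrho1' : True)
variable (hk0 : 0 ≤ k) (hk1 : k ≤ 1 / rho a t b 1)
variable (hgF : ∀ h : ℕ, h ≤ t - 1 → ∀ z : ℝ,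
      mu a h - lam a t b + rho a t b h < z → z ≤ mu a (h + 1) - lam a t b →
      g z = (h : ℝ))
variable (hgS : ∀ h : ℕ, 1 ≤ h → h ≤ t - 1 → ∀ z : ℝ,
      mu a h - lam a t b < z → z ≤ mu a h - lam a t b + rho a t b h →
      g z = (h : ℝ) - wk (rho a t b 1) (k) (mu a h - lam a t b + rho a t b h - z))

lemma kr1 (hrho1 : 0 < rho a t b 1) (hk1 : k ≤ 1 / rho a t b 1) :
    k * rho a t b 1 ≤ 1 := by
  have := (le_div_iff₀ hrho1).mp hk1
  linarith

lemma wk_nonneg (hk0 : 0 ≤ k) (x : ℝ) (hx : 0 ≤ x) (hkr : k * rho a t b 1 ≤ 1) :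
    0 ≤ wk (rho a t b 1) k x := by
  unfold wk
  have : 0 ≤ k * x := mul_nonneg hk0 hx
  linarith

lemma wk_le_one (hk0 : 0 ≤ k) (x : ℝ) (hxr : x ≤ rho a t b 1) (hkr : k * rho a t b 1 ≤ 1) :
    wk (rho a t b 1) k x ≤ 1 := by
  unfold wk
  have : k * x ≤ k * rho a t b 1 := mul_le_mul_of_nonneg_left hxr hk0
  linarith

lemma wk_mono (hk0 : 0 ≤ k) (x y : ℝ) (hxy : x ≤ y) : wk (rho a t b 1) k x ≤ wk (rho a t b 1) k y := by
  unfold wk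
  have : k * x ≤ k * y := mul_le_mul_of_nonneg_left hxy hk0
  linarith

include hmono hcover hmin ht in
/-- Every `z ∈ (0, b]` lies in some `F_h` or `S_h`. -/
lemma locate : ∀ z : ℝ, 0 < z → z ≤ mu a t - lam a t b → ∃ h, h + 1 ≤ t ∧
    ((mu a h - lam a t b + rho a t b h < z ∧ z ≤ mu a (h + 1) - lam a t b) ∨
     (1 ≤ h ∧ mu a h - lam a t b < z ∧ z ≤ mu a h - lam a t b + rho a t b h)) := by
  have hlam := lam_pos a t b hcover
  have haux : ∀ H : ℕ, H ≤ t → ∀ z : ℝ, 0 < z → z ≤ mu a H - lam a t b → ∃ h, h + 1 ≤ H ∧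
      ((mu a h - lam a t b + rho a t b h < z ∧ z ≤ mu a (h + 1) - lam a t b) ∨
       (1 ≤ h ∧ mu a h - lam a t b < z ∧ z ≤ mu a h - lam a t b + rho a t b h)) := by
    intro H
    induction H with
    | zero =>
      intro _ z hz hle
      rw [mu_zero] at hle
      linarith
    | succ H ih =>
      intro hHt z hz hle
      by_cases hc : z ≤ mu a H - lam a t b
      · obtain ⟨h, hh, hcase⟩ := ih (by omega) z hz hc
        exact ⟨h, by omega, hcase⟩
      · push_neg at hc
        match H, hc with
        | 0, hc =>
          refine ⟨0, by omega, Or.inl ⟨?_, hle⟩⟩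
          rw [mu_zero, rho_zero a t b (le_of_lt hlam)]
          linarith
        | (H' + 1), hc =>
          by_cases hs : z ≤ mu a (H' + 1) - lam a t b + rho a t b (H' + 1)
          · exact ⟨H' + 1, le_rfl, Or.inr ⟨by omega, hc, hs⟩⟩
          · push_neg at hs
            exact ⟨H' + 1, le_rfl, Or.inl ⟨hs, hle⟩⟩
  intro z hz hle
  exact haux t le_rfl z hz hle

include hmono hcover hmin ht hrho1 hk0 hk1 hgF hgS in
/-- Lower bound: if `z > M_h + ρ_h` and `z ≤ b` then `g z ≥ h`. -/
lemma gLB : ∀ h : ℕ, h + 1 ≤ t → ∀ z : ℝ,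
    mu a h - lam a t b + rho a t b h < z → z ≤ mu a t - lam a t b →
    (h : ℝ) ≤ g z := by
  intro h hht z hz1 hz2
  have hlam := lam_pos a t b hcover
  have hl1 : lam a t b ≤ a 1 := lam_le_a a t b hmono hmin 1 le_rfl (by omega)
  have hkr := kr1 a t b k hrho1 hk1
  have hz0 : 0 < z := by
    have := E_mono a t b hl1 (Nat.zero_le h)
    simp only [mu_zero, rho_zero a t b (le_of_lt hlam)] at this
    linarith
  obtain ⟨h', hh't, hcase⟩ := locate a t b hmono hcover hmin ht z hz0 hz2
  rcases hcase with ⟨hF1, hF2⟩ | ⟨hS0, hS1, hS2⟩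
  · rw [hgF h' (by omega) z hF1 hF2]
    have hhh : h ≤ h' := by
      by_contra hcon
      push_neg at hcon
      have h1 : mu a (h' + 1) ≤ mu a h := mu_mono a (by omega)
      have h2 := rho_nonneg a t b h
      linarith
    exact_mod_cast hhh
  · rw [hgS h' hS0 (by omega) z hS1 hS2]
    have hhh : h + 1 ≤ h' := by
      by_contra hcon
      push_neg at hcon
      have h1 := E_mono a t b hl1 (show h' ≤ h by omega)
      simp only at h1
      linarith
    have hx0 : 0 ≤ mu a h' - lam a t b + rho a t b h' - z := by linarith
    have hxr : mu a h' - lam a t b + rho a t b h' - z ≤ rho a t b 1 := by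
      have := rho_anti a t b hmono 1 h' hS0 hh't
      linarith
    have hw := wk_le_one a t b k hk0 _ hxr hkr
    have : (h:ℝ) + 1 ≤ h' := by exact_mod_cast hhh
    linarith

include hmono hcover hmin ht hrho1 hk0 hk1 hgF hgS in
/-- `g` is monotone on `(0, b]`. -/
lemma gmono : ∀ z₁ z₂ : ℝ, 0 < z₁ → z₁ ≤ z₂ → z₂ ≤ mu a t - lam a t b →
    g z₁ ≤ g z₂ := by
  intro z₁ z₂ h01 h12 h2b
  have hlam := lam_pos a t b hcover
  have hl1 : lam a t b ≤ a 1 := lam_le_a a t b hmono hmin 1 le_rfl (by omega)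
  have hkr := kr1 a t b k hrho1 hk1
  obtain ⟨h₁, h1t, hcase1⟩ := locate a t b hmono hcover hmin ht z₁ h01 (le_trans h12 h2b)
  rcases hcase1 with ⟨hF1, hF2⟩ | ⟨hS0, hS1, hS2⟩
  · -- z₁ in F_{h₁} : g z₁ = h₁ and z₂ > M_{h₁} + ρ_{h₁}
    rw [hgF h₁ (by omega) z₁ hF1 hF2]
    exact gLB a t b k g hmono hcover hmin ht hrho1 hk0 hk1 hgF hgS h₁ h1t z₂
      (by linarith) h2b
  · -- z₁ in S_{h₁}
    rw [hgS h₁ hS0 (by omega) z₁ hS1 hS2]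
    obtain ⟨h₂, h2t, hcase2⟩ := locate a t b hmono hcover hmin ht z₂ (by linarith) h2b
    have hx0 : 0 ≤ mu a h₁ - lam a t b + rho a t b h₁ - z₁ := by linarith
    have hw0 := wk_nonneg a t b k hk0 _ hx0 hkr
    rcases hcase2 with ⟨hG1, hG2⟩ | ⟨hT0, hT1, hT2⟩
    · rw [hgF h₂ (by omega) z₂ hG1 hG2]
      have hhh : h₁ ≤ h₂ := by
        by_contra hcon
        push_neg at hcon
        have h1 : mu a (h₂ + 1) ≤ mu a h₁ := mu_mono a (by omega)
        linarith
      have : (h₁:ℝ) ≤ h₂ := by exact_mod_cast hhh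
      linarith
    · rw [hgS h₂ hT0 (by omega) z₂ hT1 hT2]
      rcases lt_trichotomy h₁ h₂ with hlt | heq | hgt
      · have hy0 : 0 ≤ mu a h₂ - lam a t b + rho a t b h₂ - z₂ := by linarith
        have hyr : mu a h₂ - lam a t b + rho a t b h₂ - z₂ ≤ rho a t b 1 := by
          have := rho_anti a t b hmono 1 h₂ hT0 h2t
          linarith
        have hw1 := wk_le_one a t b k hk0 _ hyr hkr
        have : (h₁:ℝ) + 1 ≤ h₂ := by exact_mod_cast hlt
        linarith
      · subst heq
        have := wk_mono a t b k hk0 (mu a h₁ - lam a t b + rho a t b h₁ - z₂)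
          (mu a h₁ - lam a t b + rho a t b h₁ - z₁) (by linarith)
        linarith
      · exfalso
        have h1 : mu a (h₂ + 1) ≤ mu a h₁ := mu_mono a (by omega)
        have h2 : rho a t b h₂ ≤ a (h₂ + 1) := rho_le a t b h₂ hl1
        have h3 := mu_succ a h₂
        linarith

include hmono hcover hmin ht hrho1 hk0 hk1 hgF hgS in
lemma gFF : ∀ h₁ h₂ : ℕ, ∀ u v : ℝ, h₁ + 1 ≤ t → h₂ + 1 ≤ t →
    mu a h₁ - lam a t b + rho a t b h₁ < u → u ≤ mu a (h₁ + 1) - lam a t b →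
    mu a h₂ - lam a t b + rho a t b h₂ < v → v ≤ mu a (h₂ + 1) - lam a t b →
    u + v ≤ mu a t - lam a t b → g u + g v ≤ g (u + v) := by
  intro h₁ h₂ u v h1t h2t hu1 hu2 hv1 hv2 hsum
  have hlam := lam_pos a t b hcover
  have hl1 : lam a t b ≤ a 1 := lam_le_a a t b hmono hmin 1 le_rfl (by omega)
  rw [hgF h₁ (by omega) u hu1 hu2, hgF h₂ (by omega) v hv1 hv2]
  rcases le_or_gt (h₁ + h₂ + 1) t with hle | hgt
  · rcases Nat.eq_zero_or_pos h₁ with rfl | h1pos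
    · have hu0 : 0 < u := by
        rw [mu_zero, rho_zero a t b (le_of_lt hlam)] at hu1; linarith
      have := gLB a t b k g hmono hcover hmin ht hrho1 hk0 hk1 hgF hgS h₂ h2t (u + v)
        (by linarith) hsum
      push_cast
      linarith
    rcases Nat.eq_zero_or_pos h₂ with rfl | h2pos
    · have hv0 : 0 < v := by
        rw [mu_zero, rho_zero a t b (le_of_lt hlam)] at hv1; linarith
      have := gLB a t b k g hmono hcover hmin ht hrho1 hk0 hk1 hgF hgS h₁ h1t (u + v)
        (by linarith) hsum
      push_cast
      linarith
    have hA := lemA a t b hmono h₁ h₂ h1pos h2pos hle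
    have := gLB a t b k g hmono hcover hmin ht hrho1 hk0 hk1 hgF hgS (h₁ + h₂) (by omega)
      (u + v) (by linarith) hsum
    push_cast at this
    linarith
  · exfalso
    have h1pos : 1 ≤ h₁ := by omega
    have h2pos : 1 ≤ h₂ := by omega
    have hA' := lemA' a t b hmono hl1 h₁ h₂ h1pos h2pos h1t h2t (by omega)
    linarith

include hmono hcover hmin ht hrho1 hk0 hk1 hgF hgS in
lemma gSF : ∀ h₁ h₂ : ℕ, ∀ u v : ℝ, 1 ≤ h₁ → h₁ + 1 ≤ t → h₂ + 1 ≤ t →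
    mu a h₁ - lam a t b < u → u ≤ mu a h₁ - lam a t b + rho a t b h₁ →
    mu a h₂ - lam a t b + rho a t b h₂ < v → v ≤ mu a (h₂ + 1) - lam a t b →
    u + v ≤ mu a t - lam a t b → g u + g v ≤ g (u + v) := by
  intro h₁ h₂ u v h1pos h1t h2t hu1 hu2 hv1 hv2 hsum
  have hlam := lam_pos a t b hcover
  have hl1 : lam a t b ≤ a 1 := lam_le_a a t b hmono hmin 1 le_rfl (by omega)
  have hkr := kr1 a t b k hrho1 hk1
  have hE2 : 0 ≤ mu a h₂ - lam a t b + rho a t b h₂ := by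
    have := E_mono a t b hl1 (Nat.zero_le h₂)
    simp only [mu_zero, rho_zero a t b (le_of_lt hlam)] at this
    linarith
  have hv0 : 0 < v := by linarith
  rw [hgS h₁ h1pos (by omega) u hu1 hu2, hgF h₂ (by omega) v hv1 hv2]
  have hx10 : 0 ≤ mu a h₁ - lam a t b + rho a t b h₁ - u := by linarith
  have hw0 := wk_nonneg a t b k hk0 _ hx10 hkr
  rcases le_or_gt (t + 1) (h₁ + h₂) with hof | hH
  · exfalso
    have h2pos : 1 ≤ h₂ := by omega
    have hD' := lemD' a t b hmono hl1 h₁ h₂ h1pos h2pos h1t h2t hof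
    have := rho_nonneg a t b h₂
    linarith
  rcases eq_or_lt_of_le (Nat.succ_le_of_lt hH) with heq | hlt
  · exfalso
    have hB := lemB a t b hmono h₁ h₂ h1pos (by omega)
    rw [show h₁ + h₂ = t by omega] at hB
    linarith
  -- now h₁ + h₂ + 1 ≤ t
  have hB := lemB a t b hmono h₁ h₂ h1pos (by omega)
  have hMH : mu a (h₁ + h₂) - lam a t b < u + v := by linarith
  by_cases hc : u + v ≤ mu a (h₁ + h₂) - lam a t b + rho a t b (h₁ + h₂)
  · rw [hgS (h₁ + h₂) (by omega) (by omega) (u + v) hMH hc]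
    have hyx : mu a (h₁ + h₂) - lam a t b + rho a t b (h₁ + h₂) - (u + v) ≤
        mu a h₁ - lam a t b + rho a t b h₁ - u := by
      rcases Nat.eq_zero_or_pos h₂ with rfl | h2pos
      · simp only [Nat.add_zero] at *
        rw [mu_zero, rho_zero a t b (le_of_lt hlam)] at hv1
        linarith
      · have hA := lemA a t b hmono h₁ h₂ h1pos h2pos (by omega)
        linarith
    have hwm := wk_mono a t b k hk0 _ _ hyx
    push_cast
    linarith
  · push_neg at hc
    have := gLB a t b k g hmono hcover hmin ht hrho1 hk0 hk1 hgF hgS (h₁ + h₂) (by omega)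
      (u + v) hc hsum
    push_cast at this
    linarith

include hmono hcover hmin ht hrho1 hk0 hk1 hgF hgS in
lemma gSS (hmain : rho a t b 1 ≤ mu a 1 - lam a t b) :
    ∀ h₁ h₂ : ℕ, ∀ u v : ℝ, 1 ≤ h₁ → 1 ≤ h₂ → h₁ + 1 ≤ t → h₂ + 1 ≤ t →
    mu a h₁ - lam a t b < u → u ≤ mu a h₁ - lam a t b + rho a t b h₁ →
    mu a h₂ - lam a t b < v → v ≤ mu a h₂ - lam a t b + rho a t b h₂ →
    u + v ≤ mu a t - lam a t b → g u + g v ≤ g (u + v) := by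
  intro h₁ h₂ u v h1pos h2pos h1t h2t hu1 hu2 hv1 hv2 hsum
  have hlam := lam_pos a t b hcover
  have hl1 : lam a t b ≤ a 1 := lam_le_a a t b hmono hmin 1 le_rfl (by omega)
  have hkr := kr1 a t b k hrho1 hk1
  rw [hgS h₁ h1pos (by omega) u hu1 hu2, hgS h₂ h2pos (by omega) v hv1 hv2]
  have hx10 : 0 ≤ mu a h₁ - lam a t b + rho a t b h₁ - u := by linarith
  have hx20 : 0 ≤ mu a h₂ - lam a t b + rho a t b h₂ - v := by linarith
  have hw10 := wk_nonneg a t b k hk0 _ hx10 hkr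
  have hw20 := wk_nonneg a t b k hk0 _ hx20 hkr
  rcases le_or_gt (t + 1) (h₁ + h₂) with hof | hH
  · exfalso
    have hD' := lemD' a t b hmono hl1 h₁ h₂ h1pos h2pos h1t h2t hof
    linarith
  -- h₁ + h₂ ≤ t
  by_cases hc1 : u + v ≤ mu a (h₁ + h₂) - lam a t b
  · -- F branch at H - 1, using lemD and lemC
    have hD := lemD a t b hmono hrho1 hmain hl1 h₁ h₂ h1pos h2pos (by omega)
    have e : h₁ + h₂ - 1 + 1 = h₁ + h₂ := by omega
    rw [hgF (h₁ + h₂ - 1) (by omega) (u + v) (by linarith) (by rw [e]; exact hc1)]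
    have hC := lemC a t b hmono hrho1 h₁ h₂ h1pos h2pos (by omega)
    have hrsum : rho a t b 1 ≤ (mu a h₁ - lam a t b + rho a t b h₁ - u) +
        (mu a h₂ - lam a t b + rho a t b h₂ - v) := by linarith
    have hkk : k * rho a t b 1 ≤ k * ((mu a h₁ - lam a t b + rho a t b h₁ - u) +
        (mu a h₂ - lam a t b + rho a t b h₂ - v)) := mul_le_mul_of_nonneg_left hrsum hk0
    have hcast : ((h₁ + h₂ - 1 : ℕ) : ℝ) = (h₁ : ℝ) + h₂ - 1 := by
      push_cast [Nat.cast_sub (show 1 ≤ h₁ + h₂ by omega)]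
      ring
    rw [hcast]
    unfold wk
    have hsplit : k * ((mu a h₁ - lam a t b + rho a t b h₁ - u) +
        (mu a h₂ - lam a t b + rho a t b h₂ - v)) =
        k * (mu a h₁ - lam a t b + rho a t b h₁ - u) +
        k * (mu a h₂ - lam a t b + rho a t b h₂ - v) := by ring
    linarith
  · push_neg at hc1
    rcases eq_or_lt_of_le (Nat.succ_le_of_lt hH) with heq | hlt
    · exfalso
      rw [show h₁ + h₂ = t by omega] at hc1
      linarith
    by_cases hc2 : u + v ≤ mu a (h₁ + h₂) - lam a t b + rho a t b (h₁ + h₂)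
    · rw [hgS (h₁ + h₂) (by omega) (by omega) (u + v) hc1 hc2]
      have hA := lemA a t b hmono h₁ h₂ h1pos h2pos (by omega)
      have hyx : mu a (h₁ + h₂) - lam a t b + rho a t b (h₁ + h₂) - (u + v) ≤
          (mu a h₁ - lam a t b + rho a t b h₁ - u) +
          (mu a h₂ - lam a t b + rho a t b h₂ - v) := by linarith
      have hkk : k * (mu a (h₁ + h₂) - lam a t b + rho a t b (h₁ + h₂) - (u + v)) ≤
          k * ((mu a h₁ - lam a t b + rho a t b h₁ - u) +
          (mu a h₂ - lam a t b + rho a t b h₂ - v)) := mul_le_mul_of_nonneg_left hyx hk0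
      push_cast
      unfold wk
      have hsplit : k * ((mu a h₁ - lam a t b + rho a t b h₁ - u) +
          (mu a h₂ - lam a t b + rho a t b h₂ - v)) =
          k * (mu a h₁ - lam a t b + rho a t b h₁ - u) +
          k * (mu a h₂ - lam a t b + rho a t b h₂ - v) := by ring
      linarith
    · push_neg at hc2
      have := gLB a t b k g hmono hcover hmin ht hrho1 hk0 hk1 hgF hgS (h₁ + h₂) (by omega)
        (u + v) hc2 hsum
      push_cast at this
      linarith

include hmono hcover hmin ht hrho1 hk0 hk1 hgF hgS in
lemma gsuperadd (hmain : rho a t b 1 ≤ mu a 1 - lam a t b) (hg0 : g 0 = 0) :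
    ∀ u v : ℝ, 0 < u → 0 ≤ v → u + v ≤ mu a t - lam a t b →
    g u + g v ≤ g (u + v) := by
  intro u v hu0 hv0 hsum
  rcases eq_or_lt_of_le hv0 with heq | hv0'
  · rw [← heq, hg0, add_zero, add_zero]
  obtain ⟨h₁, h1t, hcase1⟩ := locate a t b hmono hcover hmin ht u hu0 (by linarith)
  obtain ⟨h₂, h2t, hcase2⟩ := locate a t b hmono hcover hmin ht v hv0' (by linarith)
  rcases hcase1 with ⟨hF11, hF12⟩ | ⟨hS10, hS11, hS12⟩
  · rcases hcase2 with ⟨hF21, hF22⟩ | ⟨hS20, hS21, hS22⟩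
    · exact gFF a t b k g hmono hcover hmin ht hrho1 hk0 hk1 hgF hgS h₁ h₂ u v h1t h2t
        hF11 hF12 hF21 hF22 hsum
    · rw [add_comm (g u) (g v), add_comm u v]
      exact gSF a t b k g hmono hcover hmin ht hrho1 hk0 hk1 hgF hgS h₂ h₁ v u hS20 h2t h1t
        hS21 hS22 hF11 hF12 (by linarith)
  · rcases hcase2 with ⟨hF21, hF22⟩ | ⟨hS20, hS21, hS22⟩
    · exact gSF a t b k g hmono hcover hmin ht hrho1 hk0 hk1 hgF hgS h₁ h₂ u v hS10 h1t h2t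
        hS11 hS12 hF21 hF22 hsum
    · exact gSS a t b k g hmono hcover hmin ht hrho1 hk0 hk1 hgF hgS hmain h₁ h₂ u v hS10
        hS20 h1t h2t hS11 hS12 hS21 hS22 hsum

include hmono hcover hmin ht hrho1 hk0 hk1 hgF hgS in
lemma gsum (hmain : rho a t b 1 ≤ mu a 1 - lam a t b) (hg0 : g 0 = 0) :
    ∀ T : Finset ℕ, (∀ j ∈ T, 0 < (a j : ℝ)) →
    (∑ j ∈ T, (a j : ℝ)) ≤ mu a t - lam a t b →
    (∑ j ∈ T, g (a j)) ≤ g (∑ j ∈ T, (a j : ℝ)) := by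
  intro T
  induction T using Finset.induction_on with
  | empty => intro _ _; simp [hg0]
  | @insert j T' hj ih =>
    intro hTpos hTsum
    rw [Finset.sum_insert hj, Finset.sum_insert hj]
    have hja : 0 < (a j : ℝ) := hTpos j (Finset.mem_insert_self j T')
    have hT'0 : 0 ≤ ∑ i ∈ T', (a i : ℝ) :=
      Finset.sum_nonneg fun i _ => Nat.cast_nonneg _
    rw [Finset.sum_insert hj] at hTsum
    have ih' := ih (fun i hi => hTpos i (Finset.mem_insert_of_mem hi)) (by linarith)
    have hsup := gsuperadd a t b k g hmono hcover hmin ht hrho1 hk0 hk1 hgF hgS hmain hg0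
      (a j) (∑ i ∈ T', (a i : ℝ)) hja hT'0 hTsum
    linarith

include hmono hcover hmin ht hrho1 hgF in
lemma gvalM (hpos : ∀ i, 1 ≤ i → i ≤ t → 0 < a i)
    (hmain : rho a t b 1 ≤ mu a 1 - lam a t b) :
    ∀ h : ℕ, 1 ≤ h → h ≤ t → g (mu a h - lam a t b) = (h : ℝ) - 1 := by
  intro h h1 h2
  have e : h - 1 + 1 = h := by omega
  have hdd : 0 < (a 1 : ℝ) - lam a t b := by
    rw [mu_one] at hmain; linarith
  have hah : 0 < (a h : ℝ) := by exact_mod_cast hpos h h1 h2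
  have hr : rho a t b (h - 1) < a h := by
    unfold rho
    rw [e]
    exact max_lt hah (by linarith)
  have hmu : mu a h = mu a (h - 1) + a h := by
    have := mu_succ a (h - 1)
    rw [e] at this
    exact this
  have := hgF (h - 1) (by omega) (mu a h - lam a t b) (by linarith) (by rw [e])
  rw [this, Nat.cast_sub h1, Nat.cast_one]

omit hcover in
include hmono in
lemma minsum : ∀ s : ℕ, ∀ t' : ℕ, ∀ S : Finset ℕ, t' ≤ t → S ⊆ Finset.Icc 1 t' →
    S.card = s → mu a t' - mu a (t' - s) ≤ ∑ j ∈ S, (a j : ℝ) := by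
  intro s
  induction s with
  | zero =>
    intro t' S _ _ hcard
    rw [Finset.card_eq_zero.mp hcard]
    simp
  | succ s ih =>
    intro t' S htt hsub hcard
    have hne : S.Nonempty := Finset.card_pos.mp (by omega)
    set M := S.max' hne with hMdef
    have hM : M ∈ S := S.max'_mem hne
    have hMIcc := hsub hM
    rw [Finset.mem_Icc] at hMIcc
    have hcard' : (S.erase M).card = s := by
      rw [Finset.card_erase_of_mem hM, hcard]
      omega
    have hsub' : S.erase M ⊆ Finset.Icc 1 (t' - 1) := by
      intro j hj
      have hj1 := Finset.mem_of_mem_erase hj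
      have hjne := Finset.ne_of_mem_erase hj
      have hjle := S.le_max' j hj1
      have := hsub hj1
      rw [Finset.mem_Icc] at *
      omega
    have hstle : s + 1 ≤ t' := by
      have := Finset.card_le_card hsub
      rw [hcard, Nat.card_Icc] at this
      omega
    have ihh := ih (t' - 1) (S.erase M) (by omega) hsub' hcard'
    have hsumsplit : ∑ j ∈ S, (a j : ℝ) = (a M : ℝ) + ∑ j ∈ S.erase M, (a j : ℝ) :=
      (Finset.add_sum_erase S _ hM).symm
    have hmut' : mu a t' = mu a (t' - 1) + a t' := by
      have := mu_succ a (t' - 1)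
      rw [show t' - 1 + 1 = t' by omega] at this
      exact this
    have haM : (a t' : ℝ) ≤ a M := by
      exact_mod_cast hmono M t' hMIcc.1 hMIcc.2 htt
    rw [show t' - (s + 1) = t' - 1 - s by omega]
    linarith

end gside
end GK

/-- If `k ∈ [0, 1/ρ₁]` and `μ₁ − λ ≥ ρ₁`, the sequence-independent
lifting of the minimal cover inequality by `g_k` is valid for the knapsack set `P`. -/
theorem gk_lifting_valid
    (t n b : ℕ) (a : ℕ → ℕ) (k : ℝ) (g : ℝ → ℝ)
    (ht : 2 ≤ t)
    (hpos : ∀ i, 1 ≤ i → i ≤ t → 0 < a i)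
    (hmono : ∀ i j, 1 ≤ i → i ≤ j → j ≤ t → a j ≤ a i)
    (hcover : (b : ℝ) < mu a t)
    (hmin : mu a t - (a t : ℝ) ≤ (b : ℝ))
    (hrho1 : 0 < rho a t b 1)
    (htn : t < n)
    (hposn : ∀ i, 1 ≤ i → i ≤ n → 0 < a i)
    (halb : ∀ i, 1 ≤ i → i ≤ n → a i ≤ b)
    (hk0 : 0 ≤ k) (hk1 : k ≤ 1 / rho a t b 1)
    (hmain : rho a t b 1 ≤ mu a 1 - lam a t b)
    (hg0 : g 0 = 0)
    (hgF : ∀ h : ℕ, h ≤ t - 1 → ∀ z : ℝ,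
      mu a h - lam a t b + rho a t b h < z → z ≤ mu a (h + 1) - lam a t b →
      g z = (h : ℝ))
    (hgS : ∀ h : ℕ, 1 ≤ h → h ≤ t - 1 → ∀ z : ℝ,
      mu a h - lam a t b < z → z ≤ mu a h - lam a t b + rho a t b h →
      g z = (h : ℝ) - wk (rho a t b 1) (k) (mu a h - lam a t b + rho a t b h - z))
    :
    ∀ x : ℕ → ℝ, (∀ j, 1 ≤ j → j ≤ n → x j = 0 ∨ x j = 1) →
      (∑ j ∈ Finset.Icc 1 n, (a j : ℝ) * x j) ≤ (b : ℝ) →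
      (∑ j ∈ Finset.Icc 1 t, x j) + (∑ j ∈ Finset.Icc (t + 1) n, g (a j) * x j)
        ≤ (t : ℝ) - 1 := by
  classical
  intro x hx hcap
  have hbB : (b : ℝ) = mu a t - lam a t b := by unfold lam; ring
  -- splitting sums according to the 0/1 values of x
  have hsplit : ∀ (lo hi : ℕ) (f : ℕ → ℝ), 1 ≤ lo → hi ≤ n →
      (∑ j ∈ Finset.Icc lo hi, f j * x j) =
        ∑ j ∈ (Finset.Icc lo hi).filter (fun j => x j = 1), f j := by
    intro lo hi f hlo hhi
    rw [← Finset.sum_filter_add_sum_filter_not (Finset.Icc lo hi) (fun j => x j = 1)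
      (fun j => f j * x j)]
    have e1 : ∑ j ∈ (Finset.Icc lo hi).filter (fun j => ¬ x j = 1), f j * x j = 0 := by
      apply Finset.sum_eq_zero
      intro j hj
      rw [Finset.mem_filter, Finset.mem_Icc] at hj
      rcases hx j (by omega) (by omega) with h0 | h1
      · rw [h0, mul_zero]
      · exact absurd h1 hj.2
    have e2 : ∑ j ∈ (Finset.Icc lo hi).filter (fun j => x j = 1), f j * x j =
        ∑ j ∈ (Finset.Icc lo hi).filter (fun j => x j = 1), f j := by
      apply Finset.sum_congr rfl
      intro j hj
      rw [(Finset.mem_filter.mp hj).2, mul_one]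
    rw [e1, e2, add_zero]
  set S := (Finset.Icc 1 t).filter (fun j => x j = 1) with hSdef
  set T := (Finset.Icc (t+1) n).filter (fun j => x j = 1) with hTdef
  have h1 : ∑ j ∈ Finset.Icc 1 t, x j = (S.card : ℝ) := by
    have e0 : ∑ j ∈ Finset.Icc 1 t, x j = ∑ j ∈ Finset.Icc 1 t, (fun _ => (1:ℝ)) j * x j := by
      simp
    rw [e0, hsplit 1 t (fun _ => (1:ℝ)) le_rfl (le_of_lt htn)]
    simp [hSdef]
  have h2 : ∑ j ∈ Finset.Icc (t+1) n, g (a j) * x j = ∑ j ∈ T, g (a j) :=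
    hsplit (t+1) n (fun j => g (a j)) (by omega) le_rfl
  have h3 : ∑ j ∈ Finset.Icc 1 n, (a j : ℝ) * x j = ∑ j ∈ S, (a j:ℝ) + ∑ j ∈ T, (a j:ℝ) := by
    have hIoc : ∀ m p : ℕ, Finset.Icc (m+1) p = Finset.Ioc m p := by
      intro m p; ext j; simp [Finset.mem_Icc, Finset.mem_Ioc]
    have hcons := Finset.sum_Ioc_consecutive (fun j => (a j : ℝ) * x j)
      (Nat.zero_le t) (le_of_lt htn)
    have e1 : Finset.Icc 1 n = Finset.Ioc 0 n := hIoc 0 n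
    have e2 : Finset.Icc 1 t = Finset.Ioc 0 t := hIoc 0 t
    have e3 : Finset.Icc (t+1) n = Finset.Ioc t n := hIoc t n
    rw [e1, ← hcons, ← e2, ← e3,
      hsplit 1 t (fun j => (a j : ℝ)) le_rfl (le_of_lt htn),
      hsplit (t+1) n (fun j => (a j : ℝ)) (by omega) le_rfl]
  rw [h3] at hcap
  have hsub : S ⊆ Finset.Icc 1 t := Finset.filter_subset _ _
  have hsle : S.card ≤ t := by
    have := Finset.card_le_card hsub
    simpa [Nat.card_Icc] using this
  have hminsum := GK.minsum a t hmono S.card t S le_rfl hsub rfl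
  have hTnn : 0 ≤ ∑ j ∈ T, (a j : ℝ) := Finset.sum_nonneg fun j _ => Nat.cast_nonneg _
  have hslt : S.card < t := by
    rcases lt_or_eq_of_le hsle with h | h
    · exact h
    · exfalso
      rw [h] at hminsum
      simp only [Nat.sub_self, GK.mu_zero] at hminsum
      linarith
  have hz : ∑ j ∈ T, (a j : ℝ) ≤ mu a (t - S.card) - lam a t b := by linarith
  rw [h1, h2]
  rcases T.eq_empty_or_nonempty with hTe | hTne
  · rw [hTe, Finset.sum_empty, add_zero]
    have : (S.card : ℝ) + 1 ≤ t := by exact_mod_cast hslt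
    linarith
  · have hzpos : 0 < ∑ j ∈ T, (a j : ℝ) := by
      apply Finset.sum_pos _ hTne
      intro j hj
      rw [hTdef, Finset.mem_filter, Finset.mem_Icc] at hj
      exact_mod_cast hposn j (by omega) (by omega)
    have hTpos : ∀ j ∈ T, 0 < (a j : ℝ) := by
      intro j hj
      rw [hTdef, Finset.mem_filter, Finset.mem_Icc] at hj
      exact_mod_cast hposn j (by omega) (by omega)
    have hmuts : mu a (t - S.card) ≤ mu a t := GK.mu_mono a (Nat.sub_le t S.card)
    have hzB : ∑ j ∈ T, (a j : ℝ) ≤ mu a t - lam a t b := by linarith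
    have hgsum := GK.gsum a t b k g hmono hcover hmin ht hrho1 hk0 hk1 hgF hgS hmain hg0
      T hTpos hzB
    have hgm := GK.gmono a t b k g hmono hcover hmin ht hrho1 hk0 hk1 hgF hgS
      (∑ j ∈ T, (a j : ℝ)) (mu a (t - S.card) - lam a t b) hzpos hz (by linarith)
    have hval := GK.gvalM a t b g hmono hcover hmin ht hrho1 hgF hpos hmain
      (t - S.card) (by omega) (Nat.sub_le t S.card)
    rw [hval] at hgm
    have hcast : ((t - S.card : ℕ) : ℝ) = (t : ℝ) - S.card := by
      push_cast [Nat.cast_sub hsle]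
      ring
    rw [hcast] at hgm
    linarith
end

section
/- For every ε > 0 and every integer t ≥ 2, there exist an integer n > t, positive integer weights a_1 ≥ a_2 ≥ ⋯ ≥ a_t and a_{t+1}, …, a_n with a_j ≤ b for all j, and a capacity b such that C = {1, …, t} is a minimal cover satisfying μ_1 − λ ≥ ρ_1 > 0, and for every j ∉ C one has g_0(a_j) = 1/2 and g_{1/ρ_1}(a_j) ≤ ε. Consequently PC lifting yields the cut ∑_{j∈C} x_j + ∑_{j∉C} (1/2) x_j ≤ |C| − 1 while the GNS-lifted cut is dominated by ∑_{j∈C} x_j + ∑_{j∉C} ε x_j ≤ |C| − 1. -/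
/-- For every `ε > 0` and every `t ≥ 2` there is a knapsack
constraint with a minimal cover `C = {1, …, t}` satisfying `μ₁ − λ ≥ ρ₁ > 0`
such that PC lifting assigns coefficient `1/2` to every item outside the cover,
while GNS lifting assigns coefficient at most `ε`; hence PC lifting yields the cut
`∑_{j∈C} x_j + ∑_{j∉C} (1/2)x_j ≤ |C| − 1` while the GNS-lifted cut is dominated by
`∑_{j∈C} x_j + ∑_{j∉C} ε·x_j ≤ |C| − 1`. -/
theorem gns_arbitrarily_worse_than_pc
    (ε : ℝ) (hε : 0 < ε) (t : ℕ) (ht : 2 ≤ t) :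
    ∃ (n b : ℕ) (a : ℕ → ℕ),
      t < n ∧
      (∀ i, 1 ≤ i → i ≤ n → 0 < a i) ∧
      (∀ i j, 1 ≤ i → i ≤ j → j ≤ t → a j ≤ a i) ∧
      (∀ i, 1 ≤ i → i ≤ n → a i ≤ b) ∧
      (b : ℝ) < mu a t ∧
      mu a t - (a t : ℝ) ≤ (b : ℝ) ∧
      0 < rho a t b 1 ∧
      rho a t b 1 ≤ mu a 1 - lam a t b ∧
      (∀ gPC gGNS : ℝ → ℝ,
        (gPC 0 = 0) →
        (∀ h : ℕ, h ≤ t - 1 → ∀ z : ℝ,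
          mu a h - lam a t b + rho a t b h < z → z ≤ mu a (h + 1) - lam a t b →
          gPC z = (h : ℝ)) →
        (∀ h : ℕ, 1 ≤ h → h ≤ t - 1 → ∀ z : ℝ,
          mu a h - lam a t b < z → z ≤ mu a h - lam a t b + rho a t b h →
          gPC z = (h : ℝ) - wk (rho a t b 1) 0 (mu a h - lam a t b + rho a t b h - z)) →
        (gGNS 0 = 0) →
        (∀ h : ℕ, h ≤ t - 1 → ∀ z : ℝ,
          mu a h - lam a t b + rho a t b h < z → z ≤ mu a (h + 1) - lam a t b →
          gGNS z = (h : ℝ)) →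
        (∀ h : ℕ, 1 ≤ h → h ≤ t - 1 → ∀ z : ℝ,
          mu a h - lam a t b < z → z ≤ mu a h - lam a t b + rho a t b h →
          gGNS z = (h : ℝ) -
            wk (rho a t b 1) (1 / rho a t b 1) (mu a h - lam a t b + rho a t b h - z)) →
        ∀ j, t + 1 ≤ j → j ≤ n → gPC (a j) = 1 / 2 ∧ gGNS (a j) ≤ ε) := by
  obtain ⟨M, hM⟩ := exists_nat_ge (1/ε)
  set N : ℕ := max M 1 with hNdef
  have hN1 : 1 ≤ N := le_max_right _ _
  have hN0 : (0:ℝ) < (N:ℝ) := by exact_mod_cast hN1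
  have hN1R : (1:ℝ) ≤ (N:ℝ) := by exact_mod_cast hN1
  have hNε : 1 / (N:ℝ) ≤ ε := by
    have hMN : (M:ℝ) ≤ N := by exact_mod_cast le_max_left M 1
    rw [div_le_iff₀ hε] at hM
    rw [div_le_iff₀ hN0]
    nlinarith
  set a : ℕ → ℕ := fun i => if i ≤ t then 2*N else N+1 with ha
  set b : ℕ := N * (2*t - 1) with hb
  have hbR : (b:ℝ) = (N:ℝ) * (2*(t:ℝ) - 1) := by
    have h1 : 1 ≤ 2*t := by omega
    rw [hb]
    push_cast [Nat.cast_sub h1]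
    ring
  have hmu : ∀ h : ℕ, h ≤ t → mu a h = 2*(N:ℝ)*(h:ℝ) := by
    intro h hh
    have hcon : ∀ i ∈ Finset.Icc 1 h, ((a i : ℕ) : ℝ) = ((2*N : ℕ) : ℝ) := by
      intro i hi
      rw [Finset.mem_Icc] at hi
      have hit : i ≤ t := le_trans hi.2 hh
      simp only [ha]
      rw [if_pos hit]
    rw [mu, Finset.sum_congr rfl hcon, Finset.sum_const, Nat.card_Icc]
    push_cast
    ring
  have hat : a t = 2*N := by simp only [ha]; rw [if_pos le_rfl]
  have ha1 : a 1 = 2*N := by simp only [ha]; rw [if_pos (show 1 ≤ t by omega)]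
  have ha2 : a 2 = 2*N := by simp only [ha]; rw [if_pos ht]
  have hmut : mu a t = 2*(N:ℝ)*(t:ℝ) := hmu t le_rfl
  have hmu1 : mu a 1 = 2*(N:ℝ) := by rw [hmu 1 (by omega)]; push_cast; ring
  have hlam : lam a t b = (N:ℝ) := by
    rw [lam, hmut, hbR]; ring
  have hrho : rho a t b 1 = (N:ℝ) := by
    rw [rho, hlam, ha2, ha1]
    push_cast
    rw [max_eq_right (by linarith)]
    ring
  refine ⟨t + 1, b, a, by omega, ?_, ?_, ?_, ?_, ?_, ?_, ?_, ?_⟩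
  · intro i _ _
    simp only [ha]
    split <;> omega
  · intro i j hi hij hjt
    simp only [ha, if_pos hjt, if_pos (le_trans hij hjt)]
    exact le_rfl
  · intro i _ _
    have h3 : 3 ≤ 2*t - 1 := by omega
    simp only [ha, hb]
    split <;> nlinarith
  · rw [hmut, hbR]; nlinarith
  · rw [hmut, hat, hbR]; push_cast; nlinarith
  · rw [hrho]; exact hN0
  · rw [hrho, hmu1, hlam]; linarith
  · intro gPC gGNS _ _ hPCS _ _ hGNSS j hj1 hj2
    have hj : j = t + 1 := by omega
    have haj : a j = N + 1 := by simp [ha, hj]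
    have h1t : (1:ℕ) ≤ t - 1 := by omega
    have hzlo : mu a 1 - lam a t b < ((a j : ℕ) : ℝ) := by
      rw [hmu1, hlam, haj]; push_cast; linarith
    have hzhi : ((a j : ℕ) : ℝ) ≤ mu a 1 - lam a t b + rho a t b 1 := by
      rw [hmu1, hlam, hrho, haj]; push_cast; linarith
    constructor
    · rw [hPCS 1 le_rfl h1t _ hzlo hzhi, wk]
      norm_num
    · rw [hGNSS 1 le_rfl h1t _ hzlo hzhi, wk, hmu1, hlam, hrho, haj]
      push_cast
      have hNne : (N:ℝ) ≠ 0 := ne_of_gt hN0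
      field_simp
      rw [div_le_iff₀ hN0] at hNε
      nlinarith
end

section
/- Assume μ_1 − λ ≥ ρ_1 > 0. (i) If h ∈ {1, …, t−1}, ρ_h > ρ_1/2, and z satisfies μ_h − λ < z ≤ μ_h − λ + ρ_h − ρ_1/2 (so z ∈ S_h), then μ_{h−1} < z < μ_h. (ii) If h ∈ {0, …, t−1} and z ∈ F_h satisfies z ≥ μ_h, then μ_h ≤ z < μ_{h+1}. -/
/-- Assume `μ₁ − λ ≥ ρ₁ > 0`.
(i) If `1 ≤ h ≤ t−1`, `ρ_h > ρ₁/2` and `μ_h − λ < z ≤ μ_h − λ + ρ_h − ρ₁/2`,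
then `μ_{h−1} < z < μ_h`.
(ii) If `h ≤ t−1`, `z ∈ F_h` and `z ≥ μ_h`, then `μ_h ≤ z < μ_{h+1}`. -/
theorem interval_location
    (t b : ℕ) (a : ℕ → ℕ)
    (ht : 2 ≤ t)
    (hpos : ∀ i, 1 ≤ i → i ≤ t → 0 < a i)
    (hmono : ∀ i j, 1 ≤ i → i ≤ j → j ≤ t → a j ≤ a i)
    (hcover : (b : ℝ) < mu a t)
    (hmin : mu a t - (a t : ℝ) ≤ (b : ℝ))
    (hrho1 : 0 < rho a t b 1)
    (hmain : rho a t b 1 ≤ mu a 1 - lam a t b)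
    :
    (∀ h : ℕ, 1 ≤ h → h ≤ t - 1 → rho a t b 1 / 2 < rho a t b h →
      ∀ z : ℝ, mu a h - lam a t b < z →
        z ≤ mu a h - lam a t b + rho a t b h - rho a t b 1 / 2 →
        mu a (h - 1) < z ∧ z < mu a h) ∧
    (∀ h : ℕ, h ≤ t - 1 →
      ∀ z : ℝ, mu a h - lam a t b + rho a t b h < z →
        z ≤ mu a (h + 1) - lam a t b → mu a h ≤ z →
        mu a h ≤ z ∧ z < mu a (h + 1)) := by

  have hlam_pos : 0 < lam a t b := by
    simp only [lam]; linarith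
  have hlam_le : lam a t b ≤ (a t : ℝ) := by
    simp only [lam]; linarith
  have hstep : ∀ k : ℕ, mu a (k + 1) = mu a k + (a (k+1) : ℝ) := by
    intro k
    simp only [mu]
    rw [Finset.sum_Icc_succ_top (by omega : 1 ≤ k + 1)]
  constructor
  · intro h h1 h2 hr z hz1 hz2
    have hht : h ≤ t := by omega
    have hh1t : h + 1 ≤ t := by omega
    have hah : (a t : ℝ) ≤ (a h : ℝ) := by
      exact_mod_cast hmono h t h1 hht le_rfl
    have hmu : mu a h = mu a (h - 1) + (a h : ℝ) := by
      have := hstep (h - 1)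
      rwa [Nat.sub_add_cancel h1] at this
    constructor
    · have : mu a (h-1) = mu a h - (a h : ℝ) := by linarith
      linarith
    · have hrh : rho a t b h = (a (h+1) : ℝ) - ((a 1 : ℝ) - lam a t b) := by
        have hpos' : 0 < rho a t b h := lt_trans (by positivity) hr
        simp only [rho] at hpos' ⊢
        rcases le_or_gt ((a (h+1) : ℝ) - ((a 1 : ℝ) - lam a t b)) 0 with hc | hc
        · rw [max_eq_left hc] at hpos'; linarith
        · rw [max_eq_right hc.le]
      have ha1 : (a (h+1) : ℝ) ≤ (a 1 : ℝ) := by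
        exact_mod_cast hmono 1 (h+1) le_rfl (by omega) hh1t
      have hr1 : 0 < rho a t b 1 / 2 := by positivity
      rw [hrh] at hz2
      linarith
  · intro h hht z hz1 hz2 hz3
    refine ⟨hz3, ?_⟩
    calc z ≤ mu a (h+1) - lam a t b := hz2
    _ < mu a (h+1) := by linarith
end

section
/- Assume μ_1 − λ ≥ ρ_1 > 0. Let z_1 ∈ S_1 with z_1 ≤ μ_1 − λ + ρ_1/2, and let h ∈ {1, …, t−1} and z_2 ∈ S_h with z_2 ≤ μ_h − λ + ρ_h − ρ_1/2. Then μ_h − λ < z_1 + z_2 ≤ μ_{h+1} − λ; in particular, if z_1 + z_2 ≤ b then f(z_1 + z_2) = h. -/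
/-- Assume `μ₁ − λ ≥ ρ₁ > 0`. If `z₁ ∈ S₁` with
`z₁ ≤ μ₁ − λ + ρ₁/2` and `z₂ ∈ S_h` with `z₂ ≤ μ_h − λ + ρ_h − ρ₁/2`, then
`μ_h − λ < z₁ + z₂ ≤ μ_{h+1} − λ`; in particular `f(z₁ + z₂) = h` whenever
`z₁ + z₂ ≤ b`. -/
theorem pair_sum_location
    (t b : ℕ) (a : ℕ → ℕ) (f : ℝ → ℝ) (h : ℕ) (z₁ z₂ : ℝ)
    (ht : 2 ≤ t)
    (hpos : ∀ i, 1 ≤ i → i ≤ t → 0 < a i)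
    (hmono : ∀ i j, 1 ≤ i → i ≤ j → j ≤ t → a j ≤ a i)
    (hcover : (b : ℝ) < mu a t)
    (hmin : mu a t - (a t : ℝ) ≤ (b : ℝ))
    (hrho1 : 0 < rho a t b 1)
    (hmain : rho a t b 1 ≤ mu a 1 - lam a t b)
    (hf0 : ∀ z : ℝ, 0 ≤ z → z ≤ mu a 1 - lam a t b → f z = 0)
    (hfS : ∀ h : ℕ, 1 ≤ h → h ≤ t - 1 → ∀ z : ℝ,
      mu a h - lam a t b < z → z ≤ mu a (h + 1) - lam a t b → f z = (h : ℝ))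
    (hh1 : 1 ≤ h) (hht : h ≤ t - 1)
    (hz1l : mu a 1 - lam a t b < z₁) (hz1r : z₁ ≤ mu a 1 - lam a t b + rho a t b 1)
    (hz1half : z₁ ≤ mu a 1 - lam a t b + rho a t b 1 / 2)
    (hz2l : mu a h - lam a t b < z₂) (hz2r : z₂ ≤ mu a h - lam a t b + rho a t b h)
    (hz2half : z₂ ≤ mu a h - lam a t b + rho a t b h - rho a t b 1 / 2) :
    mu a h - lam a t b < z₁ + z₂ ∧ z₁ + z₂ ≤ mu a (h + 1) - lam a t b ∧
    (z₁ + z₂ ≤ (b : ℝ) → f (z₁ + z₂) = (h : ℝ)) := by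
  have hmu1 : mu a 1 = (a 1 : ℝ) := by simp [mu]
  have hmusucc : mu a (h+1) = mu a h + (a (h+1) : ℝ) := by
    rw [mu, mu, Finset.sum_Icc_succ_top (by omega : 1 ≤ h + 1)]
  have hz1pos : (0:ℝ) < z₁ := lt_trans (lt_of_lt_of_le hrho1 hmain) hz1l
  have hlow : mu a h - lam a t b < z₁ + z₂ := by linarith
  rcases le_or_gt ((a (h+1):ℝ) - ((a 1:ℝ) - lam a t b)) 0 with hc | hc
  · exfalso
    have hr0 : rho a t b h = 0 := by rw [rho]; exact max_eq_left hc
    linarith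
  · have hr : rho a t b h = (a (h+1):ℝ) - ((a 1:ℝ) - lam a t b) := by
      rw [rho]; exact max_eq_right hc.le
    have hupper : z₁ + z₂ ≤ mu a (h+1) - lam a t b := by
      rw [hmusucc]; linarith
    exact ⟨hlow, hupper, fun _ => hfS h hh1 hht _ hlow hupper⟩
end

section
/- Let h_1, h_2 ∈ {1, …, t−1} with h_1 + h_2 − 1 ≤ t, and let z_1, z_2 be reals with z_1 > μ_{h_1} − λ and z_2 > μ_{h_2} − λ. Then z_1 + z_2 > μ_{h_1 + h_2 − 1} − λ. -/
/-- If `z₁ > μ_{h₁} − λ` and `z₂ > μ_{h₂} − λ` with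
`1 ≤ h₁, h₂ ≤ t − 1` and `h₁ + h₂ − 1 ≤ t`, then `z₁ + z₂ > μ_{h₁+h₂−1} − λ`. -/
theorem pair_sum_lower_bound
    (t b : ℕ) (a : ℕ → ℕ) (h₁ h₂ : ℕ) (z₁ z₂ : ℝ)
    (ht : 2 ≤ t)
    (hpos : ∀ i, 1 ≤ i → i ≤ t → 0 < a i)
    (hmono : ∀ i j, 1 ≤ i → i ≤ j → j ≤ t → a j ≤ a i)
    (hcover : (b : ℝ) < mu a t)
    (hmin : mu a t - (a t : ℝ) ≤ (b : ℝ))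
    (hh11 : 1 ≤ h₁) (hh1t : h₁ ≤ t - 1)
    (hh21 : 1 ≤ h₂) (hh2t : h₂ ≤ t - 1)
    (hsum : h₁ + h₂ - 1 ≤ t)
    (hz1 : mu a h₁ - lam a t b < z₁) (hz2 : mu a h₂ - lam a t b < z₂) :
    mu a (h₁ + h₂ - 1) - lam a t b < z₁ + z₂ := by
  have hh : h₁ + h₂ - 1 = h₁ + (h₂ - 1) := by omega
  have hh2t' : h₂ ≤ t := by omega
  have hlam : lam a t b ≤ (a t : ℝ) := by unfold lam; linarith
  have hat : (a t : ℝ) ≤ (a h₂ : ℝ) := by exact_mod_cast hmono h₂ t hh21 hh2t' le_rfl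
  have key : mu a (h₁ + h₂ - 1) ≤ mu a h₁ + mu a h₂ - (a h₂ : ℝ) := by
    have icc : ∀ n : ℕ, Finset.Icc 1 n = Finset.Ioc 0 n := by
      intro n; rw [show (1:ℕ) = 0 + 1 from rfl, Finset.Icc_add_one_left_eq_Ioc]
    have e1 : mu a (h₁ + h₂ - 1)
        = mu a h₁ + ∑ i ∈ Finset.Ioc h₁ (h₁ + (h₂ - 1)), (a i : ℝ) := by
      unfold mu
      rw [hh, icc, icc, Finset.sum_Ioc_consecutive _ (Nat.zero_le h₁) (Nat.le_add_right _ _)]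
    have e2 : ∑ i ∈ Finset.Ioc h₁ (h₁ + (h₂ - 1)), (a i : ℝ)
        = ∑ j ∈ Finset.Ioc 0 (h₂ - 1), (a (h₁ + j) : ℝ) := by
      rw [show Finset.Ioc h₁ (h₁ + (h₂ - 1)) = Finset.Ioc (h₁ + 0) (h₁ + (h₂ - 1)) by ring_nf,
        ← Finset.map_add_left_Ioc, Finset.sum_map]
      rfl
    have e3 : ∑ j ∈ Finset.Ioc 0 (h₂ - 1), (a (h₁ + j) : ℝ)
        ≤ ∑ j ∈ Finset.Ioc 0 (h₂ - 1), (a j : ℝ) := by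
      apply Finset.sum_le_sum
      intro j hj
      simp only [Finset.mem_Ioc] at hj
      exact_mod_cast hmono j (h₁ + j) hj.1 (Nat.le_add_left _ _) (by omega)
    have e4 : mu a h₂ = (∑ j ∈ Finset.Ioc 0 (h₂ - 1), (a j : ℝ)) + (a h₂ : ℝ) := by
      unfold mu
      rw [icc, show h₂ = (h₂ - 1) + 1 by omega,
        Finset.sum_Ioc_succ_top (Nat.zero_le _)]
      simp
    linarith
  linarith
end

section
/- Assume μ_1 − λ ≥ ρ_1 > 0. Let m ≥ 2, let h_1, …, h_m ∈ {1, …, t−1} with ρ_{h_j} > 0 for every j, let z_1, …, z_m be reals with z_j > μ_{h_j} − λ for every j, and set H = h_1 + ⋯ + h_m. If H − ⌊m/2⌋ ≤ t, then z_1 + ⋯ + z_m > μ_{H − ⌊m/2⌋} − λ. -/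
lemma mu_eq_Ioc (a : ℕ → ℕ) (h : ℕ) : mu a h = ∑ i ∈ Finset.Ioc 0 h, (a i : ℝ) := by
  rw [mu, ← Finset.Icc_add_one_left_eq_Ioc, zero_add]

lemma mu_add_Ioc (a : ℕ → ℕ) {p q : ℕ} (hpq : p ≤ q) :
    mu a q = mu a p + ∑ i ∈ Finset.Ioc p q, (a i : ℝ) := by
  rw [mu_eq_Ioc, mu_eq_Ioc, Finset.sum_Ioc_consecutive _ (Nat.zero_le p) hpq]

lemma mu_superadd (t : ℕ) (a : ℕ → ℕ)
    (hmono : ∀ i j, 1 ≤ i → i ≤ j → j ≤ t → a j ≤ a i)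
    {p q : ℕ} (hp : 1 ≤ p) (hq : 1 ≤ q) (hpq : p + q - 1 ≤ t) :
    mu a (p + q - 1) + mu a 1 ≤ mu a p + mu a q := by
  have h1 : p ≤ p + q - 1 := by omega
  have h2 : (1 : ℕ) ≤ q := hq
  rw [mu_add_Ioc a h1, mu_add_Ioc a h2]
  have hmap : Finset.Ioc p (p + q - 1) = (Finset.Ioc 1 q).map (addRightEmbedding (p - 1)) := by
    rw [Finset.map_add_right_Ioc]
    congr 1 <;> omega
  rw [hmap, Finset.sum_map]
  have : ∀ i ∈ Finset.Ioc 1 q, ((a (addRightEmbedding (p-1) i) : ℝ)) ≤ (a i : ℝ) := by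
    intro i hi
    simp only [Finset.mem_Ioc] at hi
    simp only [addRightEmbedding_apply]
    exact_mod_cast hmono i (i + (p - 1)) (by omega) (by omega) (by omega)
  have hle := Finset.sum_le_sum this
  have : mu a (p + q - 1) ≤ mu a p + (mu a q - mu a 1) := by
    rw [mu_add_Ioc a h1, hmap, Finset.sum_map, mu_add_Ioc a h2]
    linarith [Finset.sum_le_sum this]
  linarith [this]

lemma chain_bound (t : ℕ) (a : ℕ → ℕ)
    (hmono : ∀ i j, 1 ≤ i → i ≤ j → j ≤ t → a j ≤ a i) :
    ∀ L : List ℕ, L ≠ [] → (∀ h ∈ L, 1 ≤ h) → L.sum + 1 - L.length ≤ t →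
      mu a (L.sum + 1 - L.length) + ((L.length - 1 : ℕ) : ℝ) * mu a 1 ≤ (L.map (mu a)).sum := by
  intro L
  induction L with
  | nil => intro h; exact absurd rfl h
  | cons h L ih =>
    intro _ hall hsum
    rcases L.eq_nil_or_concat.symm with hL | rfl
    · have hLne : L ≠ [] := by rcases hL with ⟨_, _, rfl⟩; simp
      have hLall : ∀ x ∈ L, 1 ≤ x := fun x hx => hall x (List.mem_cons_of_mem _ hx)
      have hlen : L.length ≤ L.sum := List.length_le_sum_of_one_le L hLall
      have hh : 1 ≤ h := hall h List.mem_cons_self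
      have hlen1 : 1 ≤ L.length := List.length_pos_iff.2 hLne
      have hsum' : L.sum + 1 - L.length ≤ t := by
        simp only [List.sum_cons, List.length_cons] at hsum; omega
      have IH := ih hLne hLall hsum'
      have hsa := mu_superadd t a hmono hh (p := h) (q := L.sum + 1 - L.length)
        (by omega) (by simp only [List.sum_cons, List.length_cons] at hsum ⊢; omega)
      have heq : h + (L.sum + 1 - L.length) - 1 = (h :: L).sum + 1 - (h :: L).length := by
        simp only [List.sum_cons, List.length_cons]; omega
      rw [heq] at hsa
      have hc1 : ((L.length - 1 : ℕ) : ℝ) = (L.length : ℝ) - 1 := by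
        push_cast [Nat.cast_sub hlen1]; ring
      have hc2 : (((h :: L).length - 1 : ℕ) : ℝ) = (L.length : ℝ) := by
        rw [List.length_cons, Nat.add_sub_cancel]
      rw [List.sum_cons] at hsa
      rw [hc2, List.map_cons, List.sum_cons, List.sum_cons]
      rw [hc1] at IH
      linarith
    · simp

/-- Assume `μ₁ − λ ≥ ρ₁ > 0`. For `m ≥ 2` indices
`h₁, …, h_m ∈ {1, …, t−1}` with `ρ_{h_j} > 0` and reals `z_j > μ_{h_j} − λ`, if
`H − ⌊m/2⌋ ≤ t` where `H = h₁ + ⋯ + h_m`, then `∑ⱼ z_j > μ_{H−⌊m/2⌋} − λ`. -/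
theorem multi_sum_lower_bound
    (t b : ℕ) (a : ℕ → ℕ) (m : ℕ) (hs : Fin m → ℕ) (z : Fin m → ℝ)
    (ht : 2 ≤ t)
    (hpos : ∀ i, 1 ≤ i → i ≤ t → 0 < a i)
    (hmono : ∀ i j, 1 ≤ i → i ≤ j → j ≤ t → a j ≤ a i)
    (hcover : (b : ℝ) < mu a t)
    (hmin : mu a t - (a t : ℝ) ≤ (b : ℝ))
    (hrho1 : 0 < rho a t b 1)
    (hmain : rho a t b 1 ≤ mu a 1 - lam a t b)
    (hm : 2 ≤ m)
    (hs1 : ∀ j, 1 ≤ hs j) (hst : ∀ j, hs j ≤ t - 1)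
    (hsrho : ∀ j, 0 < rho a t b (hs j))
    (hz : ∀ j, mu a (hs j) - lam a t b < z j)
    (hHt : (∑ j, hs j) - m / 2 ≤ t) :
    mu a ((∑ j, hs j) - m / 2) - lam a t b < ∑ j, z j := by
  set H := ∑ j, hs j with hH
  set K := H - m / 2 with hK
  set lm := lam a t b with hlm
  set c : ℝ := (a 1 : ℝ) - lm with hc
  -- basic real facts
  have hrc : rho a t b 1 ≤ c := by rwa [mu_one] at hmain
  have hcpos : 0 < c := lt_of_lt_of_le hrho1 hrc
  have ha2c : (a 2 : ℝ) ≤ 2 * c := by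
    have h1 : (a 2 : ℝ) - c ≤ rho a t b 1 := by
      rw [rho]; exact le_max_right _ _
    linarith [hrc]
  -- list facts
  set L := List.ofFn hs with hL
  have hLsum : L.sum = H := by rw [hL, List.sum_ofFn]
  have hLlen : L.length = m := by simp [hL]
  have hLne : L ≠ [] := by
    intro h; have := congrArg List.length h; simp [hLlen] at this; omega
  have hLall : ∀ x ∈ L, 1 ≤ x := by
    intro x hx
    rw [hL, List.mem_ofFn] at hx
    obtain ⟨j, rfl⟩ := hx
    exact hs1 j
  have hmH : m ≤ H := by
    rw [← hLsum, ← hLlen]; exact List.length_le_sum_of_one_le L hLall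
  have hH1mt : L.sum + 1 - L.length ≤ t := by rw [hLsum, hLlen]; omega
  have hchain := chain_bound t a hmono L hLne hLall hH1mt
  have hmap : (L.map (mu a)).sum = ∑ j, mu a (hs j) := by
    rw [hL, List.map_ofFn, List.sum_ofFn]; rfl
  rw [hLsum, hLlen, hmap] at hchain
  -- gap between mu K and mu (H+1-m)
  have hle : H + 1 - m ≤ K := by omega
  have hgap : mu a K = mu a (H + 1 - m) + ∑ i ∈ Finset.Ioc (H + 1 - m) K, (a i : ℝ) :=
    mu_add_Ioc a hle
  set d := K - (H + 1 - m) with hd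
  have hcard : (Finset.Ioc (H + 1 - m) K).card = d := by rw [Nat.card_Ioc]
  have hsum_le : ∑ i ∈ Finset.Ioc (H + 1 - m) K, (a i : ℝ) ≤ (d : ℝ) * (a 2 : ℝ) := by
    calc ∑ i ∈ Finset.Ioc (H + 1 - m) K, (a i : ℝ)
        ≤ ∑ i ∈ Finset.Ioc (H + 1 - m) K, (a 2 : ℝ) := by
          apply Finset.sum_le_sum
          intro i hi
          simp only [Finset.mem_Ioc] at hi
          exact_mod_cast hmono 2 i (by omega) (by omega) (by omega)
      _ = (d : ℝ) * (a 2 : ℝ) := by rw [Finset.sum_const, hcard]; simp [nsmul_eq_mul]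
  have h2d : 2 * d ≤ m - 1 := by omega
  have h2dr : (d : ℝ) * (a 2 : ℝ) ≤ ((m - 1 : ℕ) : ℝ) * c := by
    calc (d : ℝ) * (a 2 : ℝ) ≤ (d : ℝ) * (2 * c) := by
          apply mul_le_mul_of_nonneg_left ha2c (by positivity)
      _ = ((2 * d : ℕ) : ℝ) * c := by push_cast; ring
      _ ≤ ((m - 1 : ℕ) : ℝ) * c := by
          apply mul_le_mul_of_nonneg_right _ hcpos.le
          exact_mod_cast h2d
  -- combine
  have hmu1 : mu a 1 = c + lm := by rw [mu_one]; ring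
  have hkey : mu a K + ((m - 1 : ℕ) : ℝ) * lm ≤ ∑ j, mu a (hs j) := by
    rw [hmu1] at hchain
    have : mu a K ≤ mu a (H + 1 - m) + ((m - 1 : ℕ) : ℝ) * c := by
      rw [hgap]; linarith
    linarith [hchain]
  -- strict sum
  have hne : (Finset.univ : Finset (Fin m)).Nonempty := by
    refine ⟨⟨0, by omega⟩, Finset.mem_univ _⟩
  have hstrict : ∑ j, (mu a (hs j) - lm) < ∑ j, z j :=
    Finset.sum_lt_sum_of_nonempty hne (fun j _ => hz j)
  have hsplit : ∑ j, (mu a (hs j) - lm) = (∑ j, mu a (hs j)) - (m : ℝ) * lm := by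
    rw [Finset.sum_sub_distrib, Finset.sum_const, Finset.card_univ, Fintype.card_fin,
      nsmul_eq_mul]
  have hcastm : ((m - 1 : ℕ) : ℝ) = (m : ℝ) - 1 := by
    have : ((m - 1 : ℕ) : ℝ) = ((m : ℕ) : ℝ) - ((1 : ℕ) : ℝ) := by
      exact_mod_cast Nat.cast_sub (by omega)
    simpa using this
  rw [hcastm] at hkey
  linarith [hstrict, hsplit.symm ▸ hstrict]
end

section
/- Let (u_i)_{i≥1} and (v_i)_{i≥1} be nonincreasing sequences of nonnegative reals with v_1 > 0, u_i + v_i > 0 for all i, and u_1 ≥ v_1. Let h_1, h_2 ≥ 0 be integers and z_1, z_2 reals with z_1 > M_{h_1} + u_{h_1+1} and z_2 > M_{h_2} + u_{h_2+1}. Then z_1 + z_2 > M_{h_1 + h_2 + 1}. -/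
/-- `M_h = ∑_{i=1}^h (u_i + v_i)`. -/
noncomputable def Mseq (u v : ℕ → ℝ) (h : ℕ) : ℝ := ∑ i ∈ Finset.Icc 1 h, (u i + v i)

/-- For nonincreasing nonnegative sequences `(u_i)`, `(v_i)` with
`v₁ > 0`, `u_i + v_i > 0` and `u₁ ≥ v₁`: if `z₁ > M_{h₁} + u_{h₁+1}` and
`z₂ > M_{h₂} + u_{h₂+1}`, then `z₁ + z₂ > M_{h₁+h₂+1}`. -/
theorem generalized_sum_beyond_next_breakpoint
    (u v : ℕ → ℝ) (h₁ h₂ : ℕ) (z₁ z₂ : ℝ)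
    (hu0 : ∀ i, 1 ≤ i → 0 ≤ u i) (hv0 : ∀ i, 1 ≤ i → 0 ≤ v i)
    (humono : ∀ i j, 1 ≤ i → i ≤ j → u j ≤ u i)
    (hvmono : ∀ i j, 1 ≤ i → i ≤ j → v j ≤ v i)
    (hv1 : 0 < v 1)
    (huv : ∀ i, 1 ≤ i → 0 < u i + v i)
    (hu1v1 : v 1 ≤ u 1)
    (hz1 : Mseq u v h₁ + u (h₁ + 1) < z₁)
    (hz2 : Mseq u v h₂ + u (h₂ + 1) < z₂) :
    Mseq u v (h₁ + h₂ + 1) < z₁ + z₂ := by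
  set g : ℕ → ℝ := fun i => u (1 + i) + v (1 + i) with hg
  have hM : ∀ h, Mseq u v h = ∑ i ∈ Finset.range h, g i := by
    intro h
    unfold Mseq
    rw [show Finset.Icc 1 h = Finset.Ico 1 (h+1) by rfl, Finset.sum_Ico_eq_sum_range]
    simp [hg]
  -- split the big sum
  have hsplit : Mseq u v (h₁ + h₂ + 1)
      = Mseq u v h₂ + (g h₂ + ∑ i ∈ Finset.range h₁, g (h₂ + (i + 1))) := by
    rw [hM, hM]
    have : h₁ + h₂ + 1 = h₂ + (h₁ + 1) := by omega
    rw [this, Finset.sum_range_add]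
    congr 1
    rw [Finset.sum_range_succ']
    exact add_comm _ _
  have hbound : ∑ i ∈ Finset.range h₁, g (h₂ + (i + 1))
      ≤ ∑ i ∈ Finset.range h₁, g (i + 1) := by
    apply Finset.sum_le_sum
    intro i _
    have hu := humono (1 + (i + 1)) (1 + (h₂ + (i + 1))) (by omega) (by omega)
    have hv := hvmono (1 + (i + 1)) (1 + (h₂ + (i + 1))) (by omega) (by omega)
    simp only [hg]
    linarith
  have htail : ∑ i ∈ Finset.range h₁, g (i + 1) = Mseq u v (h₁ + 1) - g 0 := by
    rw [hM]
    rw [Finset.sum_range_succ']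
    ring
  have hM1 : Mseq u v (h₁ + 1) = Mseq u v h₁ + g h₁ := by
    rw [hM, hM, Finset.sum_range_succ]
  have hg0 : g 0 = u 1 + v 1 := by simp [hg]
  have hgh1 : g h₁ = u (h₁ + 1) + v (h₁ + 1) := by simp [hg, add_comm]
  have hgh2 : g h₂ = u (h₂ + 1) + v (h₂ + 1) := by simp [hg, add_comm]
  have hv1' : v (h₁ + 1) ≤ v 1 := hvmono 1 (h₁ + 1) le_rfl (by omega)
  have hv2' : v (h₂ + 1) ≤ v 1 := hvmono 1 (h₂ + 1) le_rfl (by omega)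
  linarith
end

section
/- There exist an integer t ≥ 2, positive integers a_1 ≥ ⋯ ≥ a_t and a capacity b forming a minimal cover with μ_1 − λ ≥ ρ_1 > 0, and a nondecreasing function w : [0, ρ_1] → [0, 1] satisfying w(x) + w(ρ_1 − x) = 1 for all x ∈ [0, ρ_1], such that the function g_w is not superadditive on [0, b]; that is, there exist z_1, z_2 ∈ [0, b] with z_1 + z_2 ≤ b and g_w(z_1) + g_w(z_2) > g_w(z_1 + z_2). (This refutes the claim of Gu, Nemhauser, and Savelsbergh that μ_1 − λ ≥ ρ_1 and symmetry of w suffice for superadditivity.) -/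
lemma mu_const5 (h : ℕ) : mu (fun _ => 5) h = 5 * h := by
  simp [mu, Finset.sum_const, Nat.card_Icc, mul_comm]

lemma lam_const5 : lam (fun _ => 5) 3 13 = 2 := by
  simp [lam, mu_const5]; norm_num

lemma rho_const5 (h : ℕ) : rho (fun _ => 5) 3 13 h = 2 := by
  simp [rho, lam_const5, mu_const5]

/-- There is a minimal cover with `μ₁ − λ ≥ ρ₁ > 0` and a
nondecreasing symmetric function `w : [0, ρ₁] → [0, 1]` (i.e. `w(x) + w(ρ₁ − x) = 1`)
such that the lifting function `g_w` is **not** superadditive on `[0, b]`. This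
refutes the claimed generalization of Gu, Nemhauser, and Savelsbergh. -/
theorem gns_generalization_erratum :
    ∃ (t b : ℕ) (a : ℕ → ℕ) (w : ℝ → ℝ),
      2 ≤ t ∧
      (∀ i, 1 ≤ i → i ≤ t → 0 < a i) ∧
      (∀ i j, 1 ≤ i → i ≤ j → j ≤ t → a j ≤ a i) ∧
      (b : ℝ) < mu a t ∧
      mu a t - (a t : ℝ) ≤ (b : ℝ) ∧
      0 < rho a t b 1 ∧
      rho a t b 1 ≤ mu a 1 - lam a t b ∧
      (∀ x : ℝ, 0 ≤ x → x ≤ rho a t b 1 → 0 ≤ w x ∧ w x ≤ 1) ∧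
      (∀ x y : ℝ, 0 ≤ x → x ≤ y → y ≤ rho a t b 1 → w x ≤ w y) ∧
      (∀ x : ℝ, 0 ≤ x → x ≤ rho a t b 1 → w x + w (rho a t b 1 - x) = 1) ∧
      (∀ g : ℝ → ℝ,
        (g 0 = 0) →
        (∀ h : ℕ, h ≤ t - 1 → ∀ z : ℝ,
          mu a h - lam a t b + rho a t b h < z → z ≤ mu a (h + 1) - lam a t b →
          g z = (h : ℝ)) →
        (∀ h : ℕ, 1 ≤ h → h ≤ t - 1 → ∀ z : ℝ,
          mu a h - lam a t b < z → z ≤ mu a h - lam a t b + rho a t b h →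
          g z = (h : ℝ) - w (mu a h - lam a t b + rho a t b h - z)) →
        ∃ z₁ z₂ : ℝ, 0 ≤ z₁ ∧ z₁ ≤ (b : ℝ) ∧ 0 ≤ z₂ ∧ z₂ ≤ (b : ℝ) ∧
          z₁ + z₂ ≤ (b : ℝ) ∧ g (z₁ + z₂) < g z₁ + g z₂) := by
  refine ⟨3, 13, fun _ => 5,
    fun x => if x < 1 then 0 else if 1 < x then 1 else 1/2,
    by norm_num, fun i _ _ => by norm_num, fun i j _ _ _ => le_refl _, ?_, ?_, ?_, ?_,
    ?_, ?_, ?_, ?_⟩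
  · rw [mu_const5]; norm_num
  · rw [mu_const5]; norm_num
  · rw [rho_const5]; norm_num
  · rw [rho_const5, mu_const5, lam_const5]; norm_num
  · intro x hx0 hx2
    dsimp only
    constructor <;> (split_ifs <;> norm_num)
  · intro x y hx0 hxy hy2
    rw [rho_const5] at hy2
    dsimp only
    split_ifs <;> norm_num <;> linarith
  · intro x hx0 hx2
    rw [rho_const5] at hx2 ⊢
    dsimp only
    split_ifs <;> norm_num <;> linarith
  · intro g hg0 hF hS
    have hz1 : g (21/5) = 1 := by
      have := hS 1 le_rfl (by norm_num) (21/5)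
        (by rw [mu_const5, lam_const5]; norm_num)
        (by rw [mu_const5, lam_const5, rho_const5]; norm_num)
      rw [this, mu_const5, lam_const5, rho_const5]
      norm_num
    have hz2 : g (42/5) = 1 := by
      have := hS 2 (by norm_num) (by norm_num) (42/5)
        (by rw [mu_const5, lam_const5]; norm_num)
        (by rw [mu_const5, lam_const5, rho_const5]; norm_num)
      rw [this, mu_const5, lam_const5, rho_const5]
      norm_num
    refine ⟨21/5, 21/5, by norm_num, by norm_num, by norm_num, by norm_num,
      by norm_num, ?_⟩
    rw [hz1]
    have : (21:ℝ)/5 + 21/5 = 42/5 := by norm_num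
    rw [this, hz2]
    norm_num
end
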